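/- arXiv:math/0608622 — 2 statements merged into one kernel-verified Lean document; each statement's English description precedes it below -/
import Mathlib

section
/- Let n be a positive integer and let π ∈ NC(n). For every integer p satisfying |π|_out ≤ p ≤ |π|, the number of partitions ρ ∈ NC(n) such that ρ ≫ π and |ρ| = p equals the binomial coefficient C(|π| − |π|_out, p − |π|_out). -/
open Finset

attribute [local instance] Classical.propDecidable

open scoped ComplexOrder

namespace BBP

/-- Partitions of `{1,…,m}` modeled as `Finpartition`s of `univ : Finset (Fin m)`. -/
abbrev FP (m : ℕ) := Finpartition (Finset.univ : Finset (Fin m))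

noncomputable instance (m : ℕ) : Fintype (FP m) :=
  Fintype.ofInjective (fun π : FP m => π.parts) fun a b h => by
    cases a; cases b; simpa using h

/-- `x` is the minimum of the set `C`. -/
def IsMinOf {m : ℕ} (x : Fin m) (C : Finset (Fin m)) : Prop :=
  x ∈ C ∧ ∀ y ∈ C, x ≤ y

/-- `x` is the maximum of the set `C`. -/
def IsMaxOf {m : ℕ} (x : Fin m) (C : Finset (Fin m)) : Prop :=
  x ∈ C ∧ ∀ y ∈ C, y ≤ x

/-- `a` and `b` lie in one block of `π`. -/
def SameBlock {m : ℕ} (π : FP m) (a b : Fin m) : Prop :=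
  ∃ B ∈ π.parts, a ∈ B ∧ b ∈ B

/-- `π` is non-crossing: if `i<j<k<l`, `i,k` in one block and `j,l` in one block,
then all of them are in one block. -/
def IsNC {m : ℕ} (π : FP m) : Prop :=
  ∀ i j k l : Fin m, i < j → j < k → k < l →
    SameBlock π i k → SameBlock π j l → SameBlock π i j

/-- `A` embraces `B` : `min A ≤ min B` and `max B ≤ max A`. -/
def Embraces {m : ℕ} (A B : Finset (Fin m)) : Prop :=
  ∃ a₁ a₂ b₁ b₂ : Fin m, IsMinOf a₁ A ∧ IsMaxOf a₂ A ∧ IsMinOf b₁ B ∧ IsMaxOf b₂ B ∧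
    a₁ ≤ b₁ ∧ b₂ ≤ a₂

/-- `B` strictly embraces `A` : `min B < min A` and `max A < max B`. -/
def StrictlyEmbraces {m : ℕ} (B A : Finset (Fin m)) : Prop :=
  ∃ b₁ b₂ a₁ a₂ : Fin m, IsMinOf b₁ B ∧ IsMaxOf b₂ B ∧ IsMinOf a₁ A ∧ IsMaxOf a₂ A ∧
    b₁ < a₁ ∧ a₂ < b₂

/-- `A` is an outer block of `π`. -/
def IsOuter {m : ℕ} (π : FP m) (A : Finset (Fin m)) : Prop :=
  A ∈ π.parts ∧ ¬ ∃ B ∈ π.parts, StrictlyEmbraces B A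

/-- The number `|π|_out` of outer blocks of `π`. -/
noncomputable def numOuter {m : ℕ} (π : FP m) : ℕ :=
  (π.parts.filter fun A => IsOuter π A).card

/-- Reversed refinement order: every block of `ρ` is a union of blocks of `π`. -/
def Refines {m : ℕ} (π ρ : FP m) : Prop :=
  ∀ B ∈ π.parts, ∃ C ∈ ρ.parts, B ⊆ C

/-- The partial order `π ≪ ρ`. -/
def Ll {m : ℕ} (π ρ : FP m) : Prop :=
  Refines π ρ ∧
    ∀ C ∈ ρ.parts, ∃ B ∈ π.parts, ∃ x y : Fin m,
      IsMinOf x C ∧ IsMaxOf y C ∧ x ∈ B ∧ y ∈ B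

/-- The partition `1ₙ` of `{1,…,n+1}` with a single block. -/
noncomputable def fullPart (n : ℕ) : FP (n+1) :=
  Finpartition.indiscrete (by simpa using (Finset.univ_nonempty (α := Fin (n+1))).ne_empty)

/-- `π` is an interval partition. -/
def IsIntervalPartition {m : ℕ} (π : FP m) : Prop :=
  ∀ B ∈ π.parts, ∀ x ∈ B, ∀ z ∈ B, ∀ y : Fin m, x ≤ y → y ≤ z → y ∈ B

/-- `σ` is the permutation associated to `π` : on each block `{b₁ < ⋯ < b_q}` it is the
cycle `b₁ ↦ b₂ ↦ ⋯ ↦ b_q ↦ b₁`. -/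
def IsAssocPerm {m : ℕ} (π : FP m) (σ : Equiv.Perm (Fin m)) : Prop :=
  ∀ B ∈ π.parts, ∀ b ∈ B, σ b ∈ B ∧
    ((b < σ b ∧ ∀ x ∈ B, b < x → σ b ≤ x) ∨ (IsMaxOf b B ∧ IsMinOf (σ b) B))

/-- `κ` is the Kreweras complement of `π`, characterized by `P_κ = P_π⁻¹ ∘ P_{1ₙ}`,
where `P_{1ₙ}` is the cycle `1 ↦ 2 ↦ ⋯ ↦ n ↦ 1` (i.e. `finRotate`). -/
def IsKrewerasPair {m : ℕ} (π κ : FP m) : Prop :=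
  ∃ σπ σκ : Equiv.Perm (Fin m), IsAssocPerm π σπ ∧ IsAssocPerm κ σκ ∧
    σκ = σπ⁻¹ * finRotate m

/-- the element `2a-1` of `{1,…,2n}`, in `Fin (2n)` (0-indexed). -/
def oddEmb {n : ℕ} (a : Fin n) : Fin (2*n) := ⟨2*a.val, by have := a.isLt; omega⟩

/-- the element `2a` of `{1,…,2n}`, in `Fin (2n)` (0-indexed). -/
def evenEmb {n : ℕ} (a : Fin n) : Fin (2*n) := ⟨2*a.val + 1, by have := a.isLt; omega⟩

/-- `θ = π^(odd) ∪ ρ^(even)` : the blocks of `θ` are the sets `{2a-1 : a ∈ A}` for `A`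
a block of `π` and the sets `{2b : b ∈ B}` for `B` a block of `ρ`. -/
def IsOddEvenJoin {n : ℕ} (π ρ : FP n) (θ : FP (2*n)) : Prop :=
  θ.parts = π.parts.image (fun B => B.image oddEmb) ∪
    ρ.parts.image (fun B => B.image evenEmb)

/-- a block consisting of odd elements of `{1,…,2n}` (even 0-indexed values). -/
def OddBlock {m : ℕ} (B : Finset (Fin m)) : Prop := ∀ x ∈ B, x.val % 2 = 0

/-- a block consisting of even elements of `{1,…,2n}` (odd 0-indexed values). -/
def EvenBlock {m : ℕ} (B : Finset (Fin m)) : Prop := ∀ x ∈ B, x.val % 2 = 1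

/-- every block of `θ` is contained in the odds or in the evens. -/
def ParityPreserving {m : ℕ} (θ : FP m) : Prop :=
  ∀ B ∈ θ.parts, OddBlock B ∨ EvenBlock B

def OppositeParity {m : ℕ} (A B : Finset (Fin m)) : Prop :=
  (OddBlock A ∧ EvenBlock B) ∨ (EvenBlock A ∧ OddBlock B)

def SameParity {m : ℕ} (A B : Finset (Fin m)) : Prop :=
  (OddBlock A ∧ OddBlock B) ∨ (EvenBlock A ∧ EvenBlock B)

/-- `P = Parent_θ(A)` : the unique block `P ≠ A` of `θ` embracing `A` such that every
block `A' ≠ A` of `θ` embracing `A` also embraces `P`. -/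
def IsParent {m : ℕ} (θ : FP m) (A P : Finset (Fin m)) : Prop :=
  P ∈ θ.parts ∧ P ≠ A ∧ Embraces P A ∧
    ∀ A' ∈ θ.parts, A' ≠ A → Embraces A' A → Embraces A' P

/-- `θ` has exactly two outer blocks. -/
def ExactlyTwoOuterBlocks {m : ℕ} (θ : FP m) : Prop :=
  ∃ M ∈ θ.parts, ∃ N ∈ θ.parts, M ≠ N ∧ IsOuter θ M ∧ IsOuter θ N ∧
    ∀ A ∈ θ.parts, IsOuter θ A → A = M ∨ A = N

/-- A series in `ℂ₀⟨⟨z₁,…,z_k⟩⟩`, given by its family of coefficients: `f n w` is the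
coefficient of `z_{w 0} z_{w 1} ⋯ z_{w n}` (a word of length `n+1 ≥ 1`). -/
abbrev NCSeries (k : ℕ) := (n : ℕ) → (Fin (n+1) → Fin k) → ℂ

/-- The coefficient `Cf_{w|B}(f)` of the restriction of the word `w` to the set `B`,
listing the elements of `B` in increasing order.  (Equals `1` for `B = ∅`.) -/
noncomputable def partCoeff {k m : ℕ} (f : NCSeries k) (w : Fin (m+1) → Fin k)
    (B : Finset (Fin (m+1))) : ℂ :=
  if h : B.Nonempty then
    f (B.card - 1) (fun j =>
      w ((B.orderIsoOfFin (Nat.succ_pred_eq_of_pos (Finset.card_pos.mpr h)).symm j).1))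
  else 1

/-- The generalized coefficient `Cf_{w;π}(f) = ∏_{B block of π} Cf_{w|B}(f)`. -/
noncomputable def genCoeff {k m : ℕ} (f : NCSeries k) (w : Fin (m+1) → Fin k)
    (π : FP (m+1)) : ℂ :=
  ∏ B ∈ π.parts, partCoeff f w B

/-- Linear functionals on `ℂ⟨X₁,…,X_k⟩`. -/
abbrev Dist (k : ℕ) := FreeAlgebra ℂ (Fin k) →ₗ[ℂ] ℂ

/-- `μ ∈ D_alg(k)` : `μ` is normalized by `μ(1) = 1`. -/
def IsDalg {k : ℕ} (μ : Dist k) : Prop := μ 1 = 1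

/-- The moment series `M_μ`, with `(momentSeries μ) n w = μ (X_{w 0} ⋯ X_{w n})`. -/
noncomputable def momentSeries {k : ℕ} (μ : Dist k) : NCSeries k :=
  fun _ w => μ ((List.ofFn fun j => FreeAlgebra.ι ℂ (w j)).prod)

/-- `f = R_μ` : the moments of `μ` are obtained from `f` by summation over all
non-crossing partitions. -/
def IsRTransform {k : ℕ} (μ : Dist k) (f : NCSeries k) : Prop :=
  ∀ (n : ℕ) (w : Fin (n+1) → Fin k),
    momentSeries μ n w = ∑ π : FP (n+1), if IsNC π then genCoeff f w π else 0

/-- `g = η_μ` : the moments of `μ` are obtained from `g` by summation over all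
interval partitions. -/
def IsEtaSeries {k : ℕ} (μ : Dist k) (g : NCSeries k) : Prop :=
  ∀ (n : ℕ) (w : Fin (n+1) → Fin k),
    momentSeries μ n w = ∑ π : FP (n+1), if IsIntervalPartition π then genCoeff g w π else 0

/-- `μ ∈ D_c(k)` : `μ` is the joint distribution of a `k`-tuple of selfadjoint elements
with respect to a state on a unital C*-algebra. -/
def IsDc {k : ℕ} (μ : Dist k) : Prop :=
  IsDalg μ ∧
  ∃ (A : Type) (_ : NormedRing A) (_ : StarRing A) (_ : CStarRing A)
    (_ : NormedAlgebra ℂ A) (_ : StarModule ℂ A) (_ : CompleteSpace A)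
    (φ : A →ₗ[ℂ] ℂ) (x : Fin k → A),
      φ 1 = 1 ∧ (∀ a : A, 0 ≤ φ (star a * a)) ∧ (∀ i, IsSelfAdjoint (x i)) ∧
      ∀ (n : ℕ) (w : Fin (n+1) → Fin k),
        momentSeries μ n w = φ ((List.ofFn fun j => x (w j)).prod)

/-- convergence in moments. -/
def ConvInMoments {k : ℕ} (μseq : ℕ → Dist k) (μ : Dist k) : Prop :=
  ∀ P : FreeAlgebra ℂ (Fin k),
    Filter.Tendsto (fun N => μseq N P) Filter.atTop (nhds (μ P))

/-- coefficientwise convergence of series. -/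
def ConvCoeffwise {k : ℕ} (fseq : ℕ → NCSeries k) (f : NCSeries k) : Prop :=
  ∀ (n : ℕ) (w : Fin (n+1) → Fin k),
    Filter.Tendsto (fun N => fseq N n w) Filter.atTop (nhds (f n w))

/-- `ν` is the `p`-fold free additive convolution `μ ⊞ ⋯ ⊞ μ`, i.e. `R_ν = p · R_μ`. -/
def IsNFoldFree {k : ℕ} (p : ℕ) (μ ν : Dist k) : Prop :=
  ∃ f : NCSeries k, IsRTransform μ f ∧ IsRTransform ν (fun n w => (p : ℂ) * f n w)

/-- `ν` is the `p`-fold Boolean convolution `μ ⊎ ⋯ ⊎ μ`, i.e. `η_ν = p · η_μ`. -/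
def IsNFoldBool {k : ℕ} (p : ℕ) (μ ν : Dist k) : Prop :=
  ∃ g : NCSeries k, IsEtaSeries μ g ∧ IsEtaSeries ν (fun n w => (p : ℂ) * g n w)

/-- `ν = 𝔹(μ)` : the Boolean Bercovici–Pata bijection, `R_{𝔹(μ)} = η_μ`. -/
def IsBP {k : ℕ} (μ ν : Dist k) : Prop :=
  ∃ f : NCSeries k, IsEtaSeries μ f ∧ IsRTransform ν f

/-- `μ ∈ D_c(k)` is infinitely divisible with respect to `⊞`. -/
def IsInfDiv {k : ℕ} (μ : Dist k) : Prop :=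
  IsDc μ ∧ ∀ N : ℕ, 0 < N → ∃ ν : Dist k, IsDc ν ∧ IsNFoldFree N ν μ

/-- `g = Reta(f)`, i.e. there is `μ ∈ D_alg(k)` with `f = R_μ` and `g = η_μ`. -/
def RetaRel {k : ℕ} (f g : NCSeries k) : Prop :=
  ∃ μ : Dist k, IsDalg μ ∧ IsRTransform μ f ∧ IsEtaSeries μ g



/-! ### Auxiliary development -/

section Aux

variable {m : ℕ}

/-- value of the minimum of a finset of `Fin m` (junk value `0` if empty). -/
noncomputable def mnv (B : Finset (Fin m)) : ℕ :=
  if h : B.Nonempty then (B.min' h).val else 0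

/-- value of the maximum of a finset of `Fin m` (junk value `0` if empty). -/
noncomputable def mxv (B : Finset (Fin m)) : ℕ :=
  if h : B.Nonempty then (B.max' h).val else 0

lemma mnv_def {B : Finset (Fin m)} (h : B.Nonempty) : mnv B = (B.min' h).val := dif_pos h
lemma mxv_def {B : Finset (Fin m)} (h : B.Nonempty) : mxv B = (B.max' h).val := dif_pos h

lemma exists_mnv {B : Finset (Fin m)} (h : B.Nonempty) :
    ∃ x ∈ B, (x : ℕ) = mnv B ∧ ∀ y ∈ B, x ≤ y :=
  ⟨B.min' h, B.min'_mem h, (mnv_def h).symm, fun y hy => B.min'_le y hy⟩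

lemma exists_mxv {B : Finset (Fin m)} (h : B.Nonempty) :
    ∃ x ∈ B, (x : ℕ) = mxv B ∧ ∀ y ∈ B, y ≤ x :=
  ⟨B.max' h, B.max'_mem h, (mxv_def h).symm, fun y hy => B.le_max' y hy⟩

lemma mnv_le {B : Finset (Fin m)} {x : Fin m} (hx : x ∈ B) : mnv B ≤ (x : ℕ) := by
  rw [mnv_def ⟨x, hx⟩]; exact B.min'_le x hx

lemma le_mxv {B : Finset (Fin m)} {x : Fin m} (hx : x ∈ B) : (x : ℕ) ≤ mxv B := by
  rw [mxv_def ⟨x, hx⟩]; exact B.le_max' x hx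

lemma mnv_le_mxv {B : Finset (Fin m)} (h : B.Nonempty) : mnv B ≤ mxv B := by
  obtain ⟨x, hx, hv, -⟩ := exists_mnv h
  exact hv ▸ le_mxv hx

lemma mnv_lt_dim {B : Finset (Fin m)} (h : B.Nonempty) : mnv B < m := by
  rw [mnv_def h]; exact (B.min' h).isLt

lemma mnv_subset {B C : Finset (Fin m)} (hBC : B ⊆ C) (h : B.Nonempty) :
    mnv C ≤ mnv B := by
  obtain ⟨x, hx, hv, -⟩ := exists_mnv h
  exact hv ▸ mnv_le (hBC hx)

lemma mxv_subset {B C : Finset (Fin m)} (hBC : B ⊆ C) (h : B.Nonempty) :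
    mxv B ≤ mxv C := by
  obtain ⟨x, hx, hv, -⟩ := exists_mxv h
  exact hv ▸ le_mxv (hBC hx)

lemma isMinOf_iff {B : Finset (Fin m)} {x : Fin m} :
    IsMinOf x B ↔ x ∈ B ∧ (x : ℕ) = mnv B := by
  constructor
  · rintro ⟨h1, h2⟩
    refine ⟨h1, le_antisymm ?_ (mnv_le h1)⟩
    obtain ⟨y, hy, hv, -⟩ := exists_mnv ⟨x, h1⟩
    exact hv ▸ h2 y hy
  · rintro ⟨h1, h2⟩
    exact ⟨h1, fun y hy => by have := mnv_le hy; rw [Fin.le_def]; omega⟩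

lemma isMaxOf_iff {B : Finset (Fin m)} {x : Fin m} :
    IsMaxOf x B ↔ x ∈ B ∧ (x : ℕ) = mxv B := by
  constructor
  · rintro ⟨h1, h2⟩
    refine ⟨h1, le_antisymm (le_mxv h1) ?_⟩
    obtain ⟨y, hy, hv, -⟩ := exists_mxv ⟨x, h1⟩
    exact hv ▸ h2 y hy
  · rintro ⟨h1, h2⟩
    exact ⟨h1, fun y hy => by have := le_mxv hy; rw [Fin.le_def]; omega⟩

/-- strict-embrace in terms of numerical min/max values. -/
def SE (A B : Finset (Fin m)) : Prop := mnv A < mnv B ∧ mxv B < mxv A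

lemma SE_trans {A B C : Finset (Fin m)} (h1 : SE A B) (h2 : SE B C) : SE A C :=
  ⟨h1.1.trans h2.1, h2.2.trans h1.2⟩

lemma strictlyEmbraces_iff {A B : Finset (Fin m)} (hA : A.Nonempty) (hB : B.Nonempty) :
    StrictlyEmbraces B A ↔ SE B A := by
  constructor
  · rintro ⟨b₁, b₂, a₁, a₂, h1, h2, h3, h4, h5, h6⟩
    rw [isMinOf_iff] at h1 h3; rw [isMaxOf_iff] at h2 h4
    rw [Fin.lt_def] at h5 h6
    exact ⟨by omega, by omega⟩
  · rintro ⟨h1, h2⟩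
    refine ⟨B.min' hB, B.max' hB, A.min' hA, A.max' hA, ?_, ?_, ?_, ?_, ?_, ?_⟩
    · exact isMinOf_iff.mpr ⟨B.min'_mem hB, (mnv_def hB).symm⟩
    · exact isMaxOf_iff.mpr ⟨B.max'_mem hB, (mxv_def hB).symm⟩
    · exact isMinOf_iff.mpr ⟨A.min'_mem hA, (mnv_def hA).symm⟩
    · exact isMaxOf_iff.mpr ⟨A.max'_mem hA, (mxv_def hA).symm⟩
    · rw [Fin.lt_def, ← mnv_def hB, ← mnv_def hA]; exact h1
    · rw [Fin.lt_def, ← mxv_def hA, ← mxv_def hB]; exact h2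

section Partition

variable {θ : FP m}

lemma parts_nonempty {B : Finset (Fin m)} (hB : B ∈ θ.parts) : B.Nonempty :=
  θ.nonempty_of_mem_parts hB

lemma not_isOuter_iff {B : Finset (Fin m)} (hB : B ∈ θ.parts) :
    ¬ IsOuter θ B ↔ ∃ A ∈ θ.parts, SE A B := by
  unfold IsOuter
  constructor
  · intro h
    rcases not_and_or.mp h with h' | h'
    · exact absurd hB h'
    · push_neg at h'
      obtain ⟨A, hA, hSA⟩ := h'
      exact ⟨A, hA, (strictlyEmbraces_iff (parts_nonempty hB) (parts_nonempty hA)).mp hSA⟩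
  · rintro ⟨A, hA, hSA⟩ ⟨-, h2⟩
    exact h2 ⟨A, hA, (strictlyEmbraces_iff (parts_nonempty hB) (parts_nonempty hA)).mpr hSA⟩

lemma part_mem' (θ : FP m) (x : Fin m) : θ.part x ∈ θ.parts := θ.part_mem.mpr (mem_univ x)

lemma mem_part' (θ : FP m) (x : Fin m) : x ∈ θ.part x := θ.mem_part (mem_univ x)

lemma part_eq' {B : Finset (Fin m)} {x : Fin m} (hB : B ∈ θ.parts) (hx : x ∈ B) :
    θ.part x = B := θ.part_eq_of_mem hB hx

lemma sameBlock_iff {a b : Fin m} : SameBlock θ a b ↔ θ.part a = θ.part b := by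
  constructor
  · rintro ⟨W, hW, ha, hb⟩
    rw [part_eq' hW ha, part_eq' hW hb]
  · intro h
    exact ⟨θ.part a, part_mem' θ a, mem_part' θ a, h ▸ mem_part' θ b⟩

lemma fp_ext {θ' : FP m} (h : ∀ a b : Fin m, θ.part a = θ.part b ↔ θ'.part a = θ'.part b) :
    θ = θ' := by
  have hpart : ∀ x, θ.part x = θ'.part x := by
    intro x
    ext y
    rw [θ.mem_part_iff_part_eq_part (mem_univ y) (mem_univ x),
      θ'.mem_part_iff_part_eq_part (mem_univ y) (mem_univ x)]
    exact h y x
  ext B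
  constructor
  · intro hB
    obtain ⟨x, hx⟩ := parts_nonempty hB
    rw [← part_eq' hB hx, hpart x]
    exact part_mem' θ' x
  · intro hB
    obtain ⟨x, hx⟩ := parts_nonempty hB
    rw [← part_eq' hB hx, ← hpart x]
    exact part_mem' θ x

lemma val_ne_of_parts {t u : Finset (Fin m)} (ht : t ∈ θ.parts) (hu : u ∈ θ.parts)
    (htu : t ≠ u) {x y : Fin m} (hx : x ∈ t) (hy : y ∈ u) : (x : ℕ) ≠ (y : ℕ) := by
  intro h
  have hxy : x = y := Fin.val_injective h
  subst hxy
  exact htu (θ.eq_of_mem_parts ht hu hx hy)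

lemma eq_of_mnv {t u : Finset (Fin m)} (ht : t ∈ θ.parts) (hu : u ∈ θ.parts)
    (h : mnv t = mnv u) : t = u := by
  by_contra htu
  obtain ⟨x, hx, hxv, -⟩ := exists_mnv (parts_nonempty ht)
  obtain ⟨y, hy, hyv, -⟩ := exists_mnv (parts_nonempty hu)
  exact val_ne_of_parts ht hu htu hx hy (by omega)

/-- the fundamental crossing lemma. -/
lemma cross (hθ : IsNC θ) {t u : Finset (Fin m)} (ht : t ∈ θ.parts) (hu : u ∈ θ.parts)
    (htu : t ≠ u) {a b c d : Fin m} (hat : a ∈ t) (hct : c ∈ t) (hbu : b ∈ u) (hdu : d ∈ u)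
    (h1 : (a : ℕ) < b) (h2 : (b : ℕ) < c) (h3 : (c : ℕ) < d) : False := by
  obtain ⟨W, hW, haW, hbW⟩ := hθ a b c d (Fin.lt_def.mpr h1) (Fin.lt_def.mpr h2)
    (Fin.lt_def.mpr h3) ⟨t, ht, hat, hct⟩ ⟨u, hu, hbu, hdu⟩
  have h4 : t = W := θ.eq_of_mem_parts ht hW hat haW
  have h5 : W = u := θ.eq_of_mem_parts hW hu hbW hbu
  exact htu (h4.trans h5)

/-- if an element of block `t` lies strictly inside the span of another block `u`,
then `u` strictly embraces `t`. -/
lemma inside_span (hθ : IsNC θ) {t u : Finset (Fin m)} (ht : t ∈ θ.parts)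
    (hu : u ∈ θ.parts) (htu : t ≠ u) {b : Fin m} (hb : b ∈ t)
    (h1 : mnv u < (b : ℕ)) (h2 : (b : ℕ) < mxv u) : SE u t := by
  obtain ⟨x, hxu, hxv, -⟩ := exists_mnv (parts_nonempty hu)
  obtain ⟨y, hyu, hyv, -⟩ := exists_mxv (parts_nonempty hu)
  constructor
  · by_contra h
    push_neg at h
    obtain ⟨z, hzt, hzv, -⟩ := exists_mnv (parts_nonempty ht)
    have hne := val_ne_of_parts ht hu htu hzt hxu
    exact cross hθ ht hu htu hzt hb hxu hyu (by omega) (by omega) (by omega)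
  · by_contra h
    push_neg at h
    obtain ⟨w, hwt, hwv, -⟩ := exists_mxv (parts_nonempty ht)
    have hne := val_ne_of_parts ht hu htu hwt hyu
    exact cross hθ hu ht htu.symm hxu hyu hb hwt (by omega) (by omega) (by omega)

lemma spans_aux (hθ : IsNC θ) {t u : Finset (Fin m)} (ht : t ∈ θ.parts)
    (hu : u ∈ θ.parts) (htu : t ≠ u) (hlt : mnv t < mnv u) :
    mxv t < mnv u ∨ SE t u := by
  by_cases hd : mxv t < mnv u
  · exact Or.inl hd
  · push_neg at hd
    right
    obtain ⟨xt, hxt, hxtv, -⟩ := exists_mnv (parts_nonempty ht)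
    obtain ⟨yt, hyt, hytv, -⟩ := exists_mxv (parts_nonempty ht)
    obtain ⟨xu, hxu, hxuv, -⟩ := exists_mnv (parts_nonempty hu)
    obtain ⟨yu, hyu, hyuv, -⟩ := exists_mxv (parts_nonempty hu)
    have hne1 := val_ne_of_parts hu ht htu.symm hxu hyt
    refine ⟨hlt, ?_⟩
    by_contra h
    push_neg at h
    have hne2 := val_ne_of_parts ht hu htu hyt hyu
    exact cross hθ ht hu htu hxt hyt hxu hyu (by omega) (by omega) (by omega)

/-- spans of distinct blocks of a non-crossing partition are disjoint or strictly nested. -/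
lemma spans (hθ : IsNC θ) {t u : Finset (Fin m)} (ht : t ∈ θ.parts)
    (hu : u ∈ θ.parts) (htu : t ≠ u) :
    mxv t < mnv u ∨ mxv u < mnv t ∨ SE t u ∨ SE u t := by
  have hne : mnv t ≠ mnv u := fun h => htu (eq_of_mnv ht hu h)
  rcases lt_or_gt_of_ne hne with h | h
  · rcases spans_aux hθ ht hu htu h with h' | h'
    · exact Or.inl h'
    · exact Or.inr (Or.inr (Or.inl h'))
  · rcases spans_aux hθ hu ht htu.symm h with h' | h'
    · exact Or.inr (Or.inl h')
    · exact Or.inr (Or.inr (Or.inr h'))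

/-- two blocks strictly embracing a common nonempty set are comparable. -/
lemma emb_comparable (hθ : IsNC θ) {A P B : Finset (Fin m)} (hA : A ∈ θ.parts)
    (hP : P ∈ θ.parts) (hB : B.Nonempty) (hAB : SE A B) (hPB : SE P B) :
    A = P ∨ SE A P ∨ SE P A := by
  by_cases hAP : A = P
  · exact Or.inl hAP
  · have hmm := mnv_le_mxv hB
    rcases spans hθ hA hP hAP with h | h | h | h
    · exact absurd h (by obtain ⟨h1, h2⟩ := hAB; obtain ⟨h3, h4⟩ := hPB; omega)
    · exact absurd h (by obtain ⟨h1, h2⟩ := hAB; obtain ⟨h3, h4⟩ := hPB; omega)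
    · exact Or.inr (Or.inl h)
    · exact Or.inr (Or.inr h)

end Partition

end Aux


section Anchor

variable {m : ℕ}

/-- the parent of a block: the strict embracer with the largest minimum. -/
noncomputable def parentOf (θ : FP m) (B : Finset (Fin m)) : Finset (Fin m) :=
  if h : (θ.parts.filter fun A => SE A B).Nonempty then
    ((θ.parts.filter fun A => SE A B).exists_max_image mnv h).choose
  else ∅

lemma parentOf_spec (θ : FP m) {B : Finset (Fin m)}
    (h : (θ.parts.filter fun A => SE A B).Nonempty) :
    parentOf θ B ∈ θ.parts ∧ SE (parentOf θ B) B ∧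
      ∀ A ∈ θ.parts, SE A B → mnv A ≤ mnv (parentOf θ B) := by
  have hspec := ((θ.parts.filter fun A => SE A B).exists_max_image mnv h).choose_spec
  rw [parentOf, dif_pos h]
  obtain ⟨h1, h2⟩ := hspec
  rw [mem_filter] at h1
  exact ⟨h1.1, h1.2, fun A hA hSA => h2 A (mem_filter.mpr ⟨hA, hSA⟩)⟩

lemma parentOf_min {θ : FP m} (hθ : IsNC θ) {B : Finset (Fin m)} (hB : B.Nonempty)
    (h : (θ.parts.filter fun A => SE A B).Nonempty) :
    ∀ A ∈ θ.parts, SE A B → A = parentOf θ B ∨ SE A (parentOf θ B) := by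
  intro A hA hSA
  obtain ⟨hPmem, hPSE, hPmax⟩ := parentOf_spec θ h
  rcases emb_comparable hθ hA hPmem hB hSA hPSE with h' | h' | h'
  · exact Or.inl h'
  · exact Or.inr h'
  · exact absurd (hPmax A hA hSA) (by obtain ⟨h1, h2⟩ := h'; omega)

/-- iterated parent map with fuel. -/
noncomputable def anchorAux (θ : FP m) (S : Finset (Finset (Fin m))) :
    ℕ → Finset (Fin m) → Finset (Fin m)
  | 0, B => B
  | (f+1), B => if B ∈ S then anchorAux θ S f (parentOf θ B) else B

/-- hypothesis: every element of `S` is an inner block. -/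
def GoodS (θ : FP m) (S : Finset (Finset (Fin m))) : Prop :=
  ∀ B ∈ S, B ∈ θ.parts ∧ (θ.parts.filter fun A => SE A B).Nonempty

lemma anchorAux_congr {θ : FP m} {S : Finset (Finset (Fin m))} (hS : GoodS θ S) :
    ∀ f1 f2 B, B ∈ θ.parts → mnv B < f1 → mnv B < f2 →
      anchorAux θ S f1 B = anchorAux θ S f2 B := by
  intro f1
  induction f1 with
  | zero => omega
  | succ f ih =>
    intro f2 B hB h1 h2
    cases f2 with
    | zero => omega
    | succ g =>
      by_cases hBS : B ∈ S
      · have hfil := (hS B hBS).2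
        obtain ⟨hPmem, hPSE, -⟩ := parentOf_spec θ hfil
        have hlt : mnv (parentOf θ B) < mnv B := hPSE.1
        show (if B ∈ S then anchorAux θ S f (parentOf θ B) else B) =
          (if B ∈ S then anchorAux θ S g (parentOf θ B) else B)
        rw [if_pos hBS, if_pos hBS]
        exact ih g _ hPmem (by omega) (by omega)
      · show (if B ∈ S then anchorAux θ S f (parentOf θ B) else B) =
          (if B ∈ S then anchorAux θ S g (parentOf θ B) else B)
        rw [if_neg hBS, if_neg hBS]

/-- the anchor of a block: iterate the parent map while in `S`. -/
noncomputable def anchor (θ : FP m) (S : Finset (Finset (Fin m)))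
    (B : Finset (Fin m)) : Finset (Fin m) :=
  anchorAux θ S (m + 1) B

lemma anchor_eq {θ : FP m} {S : Finset (Finset (Fin m))} (hS : GoodS θ S)
    {B : Finset (Fin m)} (hB : B ∈ θ.parts) :
    anchor θ S B = if B ∈ S then anchor θ S (parentOf θ B) else B := by
  show (if B ∈ S then anchorAux θ S m (parentOf θ B) else B) = _
  by_cases hBS : B ∈ S
  · rw [if_pos hBS, if_pos hBS]
    have hfil := (hS B hBS).2
    obtain ⟨hPmem, hPSE, -⟩ := parentOf_spec θ hfil
    have h1 : mnv (parentOf θ B) < m := mnv_lt_dim (parts_nonempty hPmem)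
    exact anchorAux_congr hS m (m+1) _ hPmem h1 (by omega)
  · rw [if_neg hBS, if_neg hBS]

lemma anchor_basic {θ : FP m} {S : Finset (Finset (Fin m))} (hS : GoodS θ S) :
    ∀ B ∈ θ.parts, anchor θ S B ∈ θ.parts ∧ anchor θ S B ∉ S ∧
      (anchor θ S B = B ∨ SE (anchor θ S B) B) := by
  have key : ∀ k, ∀ B ∈ θ.parts, mnv B < k → anchor θ S B ∈ θ.parts ∧ anchor θ S B ∉ S ∧
      (anchor θ S B = B ∨ SE (anchor θ S B) B) := by
    intro k
    induction k using Nat.strong_induction_on with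
    | _ k ih =>
      intro B hB hk
      rw [anchor_eq hS hB]
      by_cases hBS : B ∈ S
      · rw [if_pos hBS]
        have hfil := (hS B hBS).2
        obtain ⟨hPmem, hPSE, -⟩ := parentOf_spec θ hfil
        have hlt : mnv (parentOf θ B) < mnv B := hPSE.1
        obtain ⟨r1, r2, r3⟩ := ih (mnv B) hk (parentOf θ B) hPmem hlt
        refine ⟨r1, r2, Or.inr ?_⟩
        rcases r3 with r3 | r3
        · rw [r3]; exact hPSE
        · exact SE_trans r3 hPSE
      · rw [if_neg hBS]
        exact ⟨hB, hBS, Or.inl rfl⟩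
  intro B hB
  exact key (mnv B + 1) B hB (Nat.lt_succ_self _)

lemma anchor_not_mem {θ : FP m} {S : Finset (Finset (Fin m))} (hS : GoodS θ S)
    {B : Finset (Fin m)} (hB : B ∉ S) : anchor θ S B = B := by
  by_cases hBp : B ∈ θ.parts
  · rw [anchor_eq hS hBp, if_neg hB]
  · -- B not a part: then B ∉ S and anchorAux never applies? B ∉ S suffices
    show (if B ∈ S then anchorAux θ S m (parentOf θ B) else B) = B
    rw [if_neg hB]

/-- the chain lemma: the anchor chain of a block passes any strict embracer consistently. -/
lemma anchor_chain {θ : FP m} (hθ : IsNC θ) {S : Finset (Finset (Fin m))} (hS : GoodS θ S) :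
    ∀ B ∈ θ.parts, ∀ Y ∈ θ.parts, SE Y B →
      (anchor θ S B = Y ∨ SE Y (anchor θ S B) ∨ anchor θ S Y = anchor θ S B) := by
  have key : ∀ k, ∀ B ∈ θ.parts, mnv B < k → ∀ Y ∈ θ.parts, SE Y B →
      (anchor θ S B = Y ∨ SE Y (anchor θ S B) ∨ anchor θ S Y = anchor θ S B) := by
    intro k
    induction k using Nat.strong_induction_on with
    | _ k ih =>
      intro B hB hk Y hY hYB
      by_cases hBS : B ∈ S
      · have hfil := (hS B hBS).2
        obtain ⟨hPmem, hPSE, hPmax⟩ := parentOf_spec θ hfil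
        have hanc : anchor θ S B = anchor θ S (parentOf θ B) := by
          rw [anchor_eq hS hB, if_pos hBS]
        rcases parentOf_min hθ (parts_nonempty hB) hfil Y hY hYB with h' | h'
        · exact Or.inr (Or.inr (by rw [hanc, h']))
        · have hlt : mnv (parentOf θ B) < mnv B := hPSE.1
          rcases ih (mnv B) hk (parentOf θ B) hPmem hlt Y hY h' with r | r | r
          · exact Or.inl (by rw [hanc, r])
          · exact Or.inr (Or.inl (by rw [hanc]; exact r))
          · exact Or.inr (Or.inr (by rw [hanc]; exact r))
      · rw [anchor_not_mem hS hBS]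
        exact Or.inr (Or.inl hYB)
  intro B hB
  exact key (mnv B + 1) B hB (Nat.lt_succ_self _)

end Anchor


section Rho

variable {m : ℕ}

/-- the partition obtained from `P` by merging each block of `S` with its parent. -/
noncomputable def rhoOf (P : FP m) (S : Finset (Finset (Fin m))) : FP m :=
  Finpartition.ofSetoid (Setoid.ker fun x => anchor P S (P.part x))

lemma rho_mem_part {P : FP m} {S : Finset (Finset (Fin m))} {x y : Fin m} :
    y ∈ (rhoOf P S).part x ↔ anchor P S (P.part x) = anchor P S (P.part y) :=
  Finpartition.mem_part_ofSetoid_iff_rel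

lemma rho_part_eq_iff {P : FP m} {S : Finset (Finset (Fin m))} {x y : Fin m} :
    (rhoOf P S).part x = (rhoOf P S).part y ↔
      anchor P S (P.part x) = anchor P S (P.part y) := by
  rw [← (rhoOf P S).mem_part_iff_part_eq_part (mem_univ x) (mem_univ y), rho_mem_part]
  exact eq_comm

lemma rho_refines (P : FP m) (S : Finset (Finset (Fin m))) : Refines P (rhoOf P S) := by
  intro B hB
  obtain ⟨x, hx⟩ := parts_nonempty hB
  refine ⟨(rhoOf P S).part x, part_mem' _ x, fun y hy => ?_⟩
  exact rho_mem_part.mpr (by rw [part_eq' hB hx, part_eq' hB hy])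

variable {P : FP m} {S : Finset (Finset (Fin m))}

lemma rho_elt_bound (hS : GoodS P S) (x : Fin m) :
    mnv (anchor P S (P.part x)) ≤ (x : ℕ) ∧ (x : ℕ) ≤ mxv (anchor P S (P.part x)) := by
  obtain ⟨-, -, h3⟩ := anchor_basic hS (P.part x) (part_mem' P x)
  have hx := mem_part' P x
  rcases h3 with h | h
  · rw [h]; exact ⟨mnv_le hx, le_mxv hx⟩
  · have h1 := mnv_le hx
    have h2 := le_mxv hx
    obtain ⟨ha, hb⟩ := h
    omega

/-- the minimum of the block of `rhoOf P S` containing `x` is attained on the anchor. -/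
lemma rho_attain (hS : GoodS P S) (x : Fin m) :
    ∃ a b : Fin m, a ∈ (rhoOf P S).part x ∧ b ∈ (rhoOf P S).part x ∧
      a ∈ anchor P S (P.part x) ∧ b ∈ anchor P S (P.part x) ∧
      (a : ℕ) = mnv (anchor P S (P.part x)) ∧ (b : ℕ) = mxv (anchor P S (P.part x)) := by
  obtain ⟨h1, h2, -⟩ := anchor_basic hS (P.part x) (part_mem' P x)
  set A := anchor P S (P.part x) with hA
  obtain ⟨a, haA, hav, -⟩ := exists_mnv (parts_nonempty h1)
  obtain ⟨b, hbA, hbv, -⟩ := exists_mxv (parts_nonempty h1)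
  have hkey : ∀ c ∈ A, c ∈ (rhoOf P S).part x := by
    intro c hc
    refine rho_mem_part.mpr ?_
    rw [part_eq' h1 hc, anchor_not_mem hS h2]
  exact ⟨a, b, hkey a haA, hkey b hbA, haA, hbA, hav, hbv⟩

lemma rho_mnv (hS : GoodS P S) (x : Fin m) :
    mnv ((rhoOf P S).part x) = mnv (anchor P S (P.part x)) ∧
    mxv ((rhoOf P S).part x) = mxv (anchor P S (P.part x)) := by
  obtain ⟨a, b, ha, hb, -, -, hav, hbv⟩ := rho_attain hS x
  constructor
  · refine le_antisymm (hav ▸ mnv_le ha) ?_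
    obtain ⟨c, hc, hcv, -⟩ := exists_mnv ⟨a, ha⟩
    have := rho_mem_part.mp hc
    have hbd := (rho_elt_bound hS c).1
    rw [← this] at hbd
    omega
  · refine le_antisymm ?_ (hbv ▸ le_mxv hb)
    obtain ⟨c, hc, hcv, -⟩ := exists_mxv ⟨a, ha⟩
    have := rho_mem_part.mp hc
    have hbd := (rho_elt_bound hS c).2
    rw [← this] at hbd
    omega

lemma rho_NC (hP : IsNC P) (hS : GoodS P S) : IsNC (rhoOf P S) := by
  intro i j k l hij hjk hkl hik hjl
  rw [sameBlock_iff] at hik hjl ⊢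
  rw [Fin.lt_def] at hij hjk hkl
  set A := anchor P S (P.part i) with hA
  set A' := anchor P S (P.part j) with hA'
  have hik' : anchor P S (P.part k) = A := (rho_part_eq_iff.mp hik).symm
  have hjl' : anchor P S (P.part l) = A' := (rho_part_eq_iff.mp hjl).symm
  by_cases hAA : A = A'
  · exact rho_part_eq_iff.mpr hAA
  · exfalso
    obtain ⟨hAp, hAS, -⟩ := anchor_basic hS (P.part i) (part_mem' P i)
    obtain ⟨hA'p, hA'S, -⟩ := anchor_basic hS (P.part j) (part_mem' P j)
    rw [← hA] at hAp hAS
    rw [← hA'] at hA'p hA'S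
    have bi := rho_elt_bound hS i
    have bj := rho_elt_bound hS j
    have bk := rho_elt_bound hS k
    have bl := rho_elt_bound hS l
    rw [← hA] at bi
    rw [← hA'] at bj
    rw [hik'] at bk
    rw [hjl'] at bl
    rcases spans hP hAp hA'p hAA with h | h | h | h
    · omega
    · omega
    · -- A' strictly inside A; k lies strictly inside the span of A'
      have hBk : P.part k ≠ A' := by
        intro heq
        apply hAA
        rw [← hik', heq, anchor_not_mem hS hA'S]
      have hSE : SE A' (P.part k) :=
        inside_span hP (part_mem' P k) hA'p hBk (mem_part' P k) (by omega) (by omega)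
      rcases anchor_chain hP hS (P.part k) (part_mem' P k) A' hA'p hSE with r | r | r
      · rw [hik'] at r; exact hAA r
      · rw [hik'] at r; obtain ⟨r1, r2⟩ := r; obtain ⟨s1, s2⟩ := h; omega
      · rw [hik', anchor_not_mem hS hA'S] at r; exact hAA r.symm
    · -- A strictly inside A'; j lies strictly inside the span of A
      have hBj : P.part j ≠ A := by
        intro heq
        exact hAA (by rw [hA', ← heq, anchor_not_mem hS (heq ▸ hAS)])
      have hSE : SE A (P.part j) :=
        inside_span hP (part_mem' P j) hAp hBj (mem_part' P j) (by omega) (by omega)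
      rcases anchor_chain hP hS (P.part j) (part_mem' P j) A hAp hSE with r | r | r
      · rw [← hA'] at r; exact hAA r.symm
      · rw [← hA'] at r; obtain ⟨r1, r2⟩ := r; obtain ⟨s1, s2⟩ := h; omega
      · rw [← hA', anchor_not_mem hS hAS] at r; exact hAA r

end Rho


section Rho2

variable {m : ℕ} {P : FP m} {S : Finset (Finset (Fin m))}

lemma rho_Ll (hS : GoodS P S) : Ll P (rhoOf P S) := by
  refine ⟨rho_refines P S, fun C hC => ?_⟩
  obtain ⟨x, hx⟩ := parts_nonempty hC
  have hCx : (rhoOf P S).part x = C := part_eq' hC hx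
  obtain ⟨hAp, -, -⟩ := anchor_basic hS (P.part x) (part_mem' P x)
  obtain ⟨a, b, ha, hb, haA, hbA, hav, hbv⟩ := rho_attain hS x
  rw [hCx] at ha hb
  refine ⟨anchor P S (P.part x), hAp, a, b, ?_, ?_, haA, hbA⟩
  · refine isMinOf_iff.mpr ⟨ha, ?_⟩
    obtain ⟨heq, -⟩ := rho_mnv hS x
    rw [hCx] at heq
    omega
  · refine isMaxOf_iff.mpr ⟨hb, ?_⟩
    obtain ⟨-, heq⟩ := rho_mnv hS x
    rw [hCx] at heq
    omega

lemma rho_card (hS : GoodS P S) (hSsub : S ⊆ P.parts) :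
    (rhoOf P S).parts.card = P.parts.card - S.card := by
  have h1 : (rhoOf P S).parts.card = (P.parts.filter fun A => A ∉ S).card := by
    refine Finset.card_bij
      (fun C hC => anchor P S (P.part ((parts_nonempty hC).choose))) ?_ ?_ ?_
    · intro C hC
      set x := (parts_nonempty hC).choose with hxdef
      obtain ⟨r1, r2, -⟩ := anchor_basic hS (P.part x) (part_mem' P x)
      exact mem_filter.mpr ⟨r1, r2⟩
    · intro C hC C' hC' heq
      set x := (parts_nonempty hC).choose with hxdef
      set x' := (parts_nonempty hC').choose with hx'def
      have hxC : x ∈ C := (parts_nonempty hC).choose_spec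
      have hx'C : x' ∈ C' := (parts_nonempty hC').choose_spec
      obtain ⟨a, b, ha, hb, haA, hbA, hav, hbv⟩ := rho_attain hS x
      obtain ⟨a', b', ha', hb', haA', hbA', hav', hbv'⟩ := rho_attain hS x'
      rw [part_eq' hC hxC] at ha
      rw [part_eq' hC' hx'C] at ha'
      have : a = a' := by
        apply Fin.val_injective
        rw [hav, hav', heq]
      subst this
      exact (rhoOf P S).eq_of_mem_parts hC hC' ha ha'
    · intro A hA
      rw [mem_filter] at hA
      obtain ⟨hAp, hAS⟩ := hA
      obtain ⟨a, haA⟩ := parts_nonempty hAp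
      refine ⟨(rhoOf P S).part a, part_mem' _ a, ?_⟩
      set x := (parts_nonempty (part_mem' (rhoOf P S) a)).choose with hxdef
      have hx : x ∈ (rhoOf P S).part a := (parts_nonempty (part_mem' (rhoOf P S) a)).choose_spec
      have h2 : anchor P S (P.part a) = anchor P S (P.part x) := rho_mem_part.mp hx
      rw [← h2, part_eq' hAp haA, anchor_not_mem hS hAS]
  rw [h1]
  have h2 : (P.parts.filter fun A => A ∈ S) = S := by
    ext A
    rw [mem_filter]
    exact ⟨fun h => h.2, fun h => ⟨hSsub h, h⟩⟩
  have h3 := P.parts.card_filter_add_card_filter_not (p := fun A => A ∈ S)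
  rw [h2] at h3
  omega

end Rho2

section Phi

variable {m : ℕ}

/-- the set of blocks of `P` whose minimum is not the minimum of their `R`-block. -/
noncomputable def PhiOf (P R : FP m) : Finset (Finset (Fin m)) :=
  P.parts.filter (fun B => ∃ x ∈ B, mnv (R.part x) < mnv B)

variable {P R : FP m}

lemma subset_part_of_refines (h : Refines P R) {B : Finset (Fin m)} {x : Fin m}
    (hB : B ∈ P.parts) (hx : x ∈ B) : B ⊆ R.part x := by
  obtain ⟨C, hC, hBC⟩ := h B hB
  rw [part_eq' hC (hBC hx)]
  exact hBC

lemma part_const_on_block (h : Refines P R) {B : Finset (Fin m)} {x y : Fin m}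
    (hB : B ∈ P.parts) (hx : x ∈ B) (hy : y ∈ B) : R.part x = R.part y :=
  part_eq' (part_mem' R y) (subset_part_of_refines h hB hy hx)

lemma phi_rho {S : Finset (Finset (Fin m))} (hS : GoodS P S) (hSsub : S ⊆ P.parts) :
    PhiOf P (rhoOf P S) = S := by
  ext B
  rw [PhiOf, mem_filter]
  constructor
  · rintro ⟨hB, x, hxB, hlt⟩
    by_contra hBS
    have hpx : P.part x = B := part_eq' hB hxB
    obtain ⟨heq, -⟩ := rho_mnv hS x
    rw [heq, hpx, anchor_not_mem hS hBS] at hlt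
    omega
  · intro hBS
    have hB := (hS B hBS).1
    obtain ⟨x, hxB⟩ := parts_nonempty hB
    refine ⟨hB, x, hxB, ?_⟩
    have hpx : P.part x = B := part_eq' hB hxB
    obtain ⟨heq, -⟩ := rho_mnv hS x
    rw [heq, hpx]
    obtain ⟨hPmem, hPSE, -⟩ := parentOf_spec P (hS B hBS).2
    have hanc : anchor P S B = anchor P S (parentOf P B) := by
      rw [anchor_eq hS hB, if_pos hBS]
    obtain ⟨-, -, r3⟩ := anchor_basic hS (parentOf P B) hPmem
    rw [← hanc] at r3
    rcases r3 with r | r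
    · rw [r]; exact hPSE.1
    · exact r.1.trans hPSE.1

/-- data of the distinguished block of an `R`-block `C`: the `P`-block containing
both the min and the max of `C`. -/
lemma dist_block (hLl : Ll P R) {C : Finset (Fin m)} (hC : C ∈ R.parts) :
    ∃ D ∈ P.parts, D ⊆ C ∧ mnv D = mnv C ∧ mxv D = mxv C := by
  obtain ⟨D, hD, xm, ym, hxm, hym, hxD, hyD⟩ := hLl.2 C hC
  rw [isMinOf_iff] at hxm
  rw [isMaxOf_iff] at hym
  have hDC : D ⊆ C := subset_part_of_refines hLl.1 hD hxD |>.trans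
    (by rw [part_eq' hC hxm.1]) 
  have hDne : D.Nonempty := ⟨xm, hxD⟩
  refine ⟨D, hD, hDC, ?_, ?_⟩
  · have h1 := mnv_le hxD
    have h2 := mnv_subset hDC hDne
    omega
  · have h1 := le_mxv hyD
    have h2 := mxv_subset hDC hDne
    omega

lemma phi_subset_inner (hLl : Ll P R) :
    ∀ B ∈ PhiOf P R, ∃ A ∈ P.parts, SE A B := by
  intro B hB'
  rw [PhiOf, mem_filter] at hB'
  obtain ⟨hB, x, hxB, hlt⟩ := hB'
  set C := R.part x with hCdef
  have hC : C ∈ R.parts := part_mem' R x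
  have hBC : B ⊆ C := subset_part_of_refines hLl.1 hB hxB
  obtain ⟨D, hD, hDC, hDmn, hDmx⟩ := dist_block hLl hC
  have hBne : B.Nonempty := ⟨x, hxB⟩
  refine ⟨D, hD, by omega, ?_⟩
  have h1 : mxv B ≤ mxv C := mxv_subset hBC hBne
  have hBD : B ≠ D := fun h => by rw [h] at hlt; omega
  rcases lt_or_eq_of_le h1 with h | h
  · omega
  · exfalso
    obtain ⟨b, hbB, hbv, -⟩ := exists_mxv hBne
    obtain ⟨d, hdD, hdv, -⟩ := exists_mxv (parts_nonempty hD)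
    exact val_ne_of_parts hB hD hBD hbB hdD (by omega)

lemma phi_card (hLl : Ll P R) : (PhiOf P R).card = P.parts.card - R.parts.card := by
  have h1 : (P.parts.filter fun B => ¬ ∃ x ∈ B, mnv (R.part x) < mnv B).card
      = R.parts.card := by
    refine Finset.card_bij
      (fun B hB => R.part ((parts_nonempty (mem_filter.mp hB).1).choose)) ?_ ?_ ?_
    · intro B hB
      exact part_mem' R _
    · intro B hB B' hB' heq
      obtain ⟨hBp, hBpred⟩ := mem_filter.mp hB
      obtain ⟨hB'p, hB'pred⟩ := mem_filter.mp hB'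
      push_neg at hBpred hB'pred
      set x := (parts_nonempty hBp).choose with hxdef
      set x' := (parts_nonempty hB'p).choose with hx'def
      have hx : x ∈ B := (parts_nonempty hBp).choose_spec
      have hx' : x' ∈ B' := (parts_nonempty hB'p).choose_spec
      have e1 : mnv (R.part x) = mnv B := by
        have := hBpred x hx
        have h2 : mnv (R.part x) ≤ mnv B :=
          mnv_subset (subset_part_of_refines hLl.1 hBp hx) ⟨x, hx⟩
        omega
      have e2 : mnv (R.part x') = mnv B' := by
        have := hB'pred x' hx'
        have h2 : mnv (R.part x') ≤ mnv B' :=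
          mnv_subset (subset_part_of_refines hLl.1 hB'p hx') ⟨x', hx'⟩
        omega
      apply eq_of_mnv hBp hB'p
      rw [← e1, ← e2, heq]
    · intro C hC
      obtain ⟨c, hcC⟩ := parts_nonempty hC
      obtain ⟨D, hD, hDC, hDmn, hDmx⟩ := dist_block hLl hC
      have hDmem : D ∈ P.parts.filter fun B => ¬ ∃ x ∈ B, mnv (R.part x) < mnv B := by
        rw [mem_filter]
        refine ⟨hD, ?_⟩
        push_neg
        intro x hxD
        have : R.part x = C := part_eq' hC (hDC hxD)
        rw [this]
        omega
      refine ⟨D, hDmem, ?_⟩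
      set x := (parts_nonempty (mem_filter.mp hDmem).1).choose with hxdef
      have hx : x ∈ D := (parts_nonempty (mem_filter.mp hDmem).1).choose_spec
      exact part_eq' hC (hDC hx)
  have h3 := P.parts.card_filter_add_card_filter_not
    (p := fun B => ∃ x ∈ B, mnv (R.part x) < mnv B)
  rw [h1] at h3
  have h4 : (PhiOf P R).card ≤ P.parts.card := Finset.card_filter_le _ _
  rw [PhiOf]
  omega

lemma goodS_phi (hLl : Ll P R) : GoodS P (PhiOf P R) := by
  intro B hB
  refine ⟨(mem_filter.mp hB).1, ?_⟩
  obtain ⟨A, hA, hSA⟩ := phi_subset_inner hLl B hB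
  exact ⟨A, mem_filter.mpr ⟨hA, hSA⟩⟩

/-- the key lemma: the anchor (w.r.t. `PhiOf P R`) of the `P`-block of `x` is the
distinguished block of the `R`-block of `x`. -/
lemma anchor_dist (hP : IsNC P) (hR : IsNC R) (hLl : Ll P R) :
    ∀ x : Fin m, anchor P (PhiOf P R) (P.part x) ⊆ R.part x ∧
      mnv (anchor P (PhiOf P R) (P.part x)) = mnv (R.part x) := by
  have hS := goodS_phi hLl
  have key : ∀ k, ∀ x : Fin m, mnv (P.part x) < k →
      anchor P (PhiOf P R) (P.part x) ⊆ R.part x ∧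
      mnv (anchor P (PhiOf P R) (P.part x)) = mnv (R.part x) := by
    intro k
    induction k using Nat.strong_induction_on with
    | _ k ih =>
      intro x hk
      set B := P.part x with hBdef
      have hB : B ∈ P.parts := part_mem' P x
      set C := R.part x with hCdef
      have hC : C ∈ R.parts := part_mem' R x
      have hBC : B ⊆ C := subset_part_of_refines hLl.1 hB (mem_part' P x)
      by_cases hBS : B ∈ PhiOf P R
      · -- B ∈ Φ : mnv C < mnv B
        have hlt : mnv C < mnv B := by
          obtain ⟨-, x0, hx0B, hlt0⟩ := mem_filter.mp hBS
          have : R.part x0 = C := part_const_on_block hLl.1 hB hx0B (mem_part' P x)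
          rwa [this] at hlt0
        obtain ⟨D, hD, hDC, hDmn, hDmx⟩ := dist_block hLl hC
        have hBne : B.Nonempty := parts_nonempty hB
        -- D strictly embraces B
        have hSEDB : SE D B := by
          refine ⟨by omega, ?_⟩
          have h1 : mxv B ≤ mxv C := mxv_subset hBC hBne
          have hBD : B ≠ D := fun h => by rw [h] at hlt; omega
          rcases lt_or_eq_of_le h1 with h | h
          · omega
          · exfalso
            obtain ⟨b, hbB, hbv, -⟩ := exists_mxv hBne
            obtain ⟨d, hdD, hdv, -⟩ := exists_mxv (parts_nonempty hD)
            exact val_ne_of_parts hB hD hBD hbB hdD (by omega)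
        have hfil : (P.parts.filter fun A => SE A B).Nonempty :=
          ⟨D, mem_filter.mpr ⟨hD, hSEDB⟩⟩
        obtain ⟨hPmem, hPSE, hPmax⟩ := parentOf_spec P hfil
        set Pb := parentOf P B with hPbdef
        -- KEY : Pb ⊆ C
        have hPbC : Pb ⊆ C := by
          by_cases hPD : Pb = D
          · rw [hPD]; exact hDC
          · -- SE D Pb
            have hcomp : SE D Pb := by
              rcases emb_comparable hP hD hPmem hBne hSEDB hPSE with h' | h' | h'
              · exact absurd h'.symm hPD
              · exact h'
              · exact absurd (hPmax D hD hSEDB) (by obtain ⟨h1, h2⟩ := h'; omega)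
            have hq1 := hPSE.1
            have hq2 := hPSE.2
            have hq3 := hcomp.1
            have hq4 := hcomp.2
            obtain ⟨p1, hp1, hp1v, -⟩ := exists_mnv (parts_nonempty hPmem)
            obtain ⟨b1, hb1, hb1v, -⟩ := exists_mnv hBne
            obtain ⟨p2, hp2, hp2v, -⟩ := exists_mxv (parts_nonempty hPmem)
            obtain ⟨c2, hc2, hc2v, -⟩ := exists_mxv (parts_nonempty hC)
            have hbmx := mnv_le_mxv hBne
            have hbmx2 : mxv B < mxv Pb := hPSE.2
            obtain ⟨W, hW, hp1W, hb1W⟩ := hR p1 b1 p2 c2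
              (Fin.lt_def.mpr (by omega)) (Fin.lt_def.mpr (by omega))
              (Fin.lt_def.mpr (by omega))
              ⟨R.part p1, part_mem' R p1, mem_part' R p1,
                subset_part_of_refines hLl.1 hPmem hp1 hp2⟩
              ⟨C, hC, hBC hb1, hc2⟩
            have h6 : R.part p1 = W :=
              R.eq_of_mem_parts (part_mem' R p1) hW (mem_part' R p1) hp1W
            have h7 : W = C := R.eq_of_mem_parts hW hC hb1W (hBC hb1)
            rw [← h7, ← h6]
            exact subset_part_of_refines hLl.1 hPmem hp1
        -- apply IH at an element of Pb
        obtain ⟨p1, hp1⟩ := parts_nonempty hPmem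
        have hPp1 : P.part p1 = Pb := part_eq' hPmem hp1
        have hRp1 : R.part p1 = C := part_eq' hC (hPbC hp1)
        have hanc : anchor P (PhiOf P R) B = anchor P (PhiOf P R) Pb := by
          rw [anchor_eq hS hB, if_pos hBS]
        have hltP : mnv Pb < mnv B := hPSE.1
        obtain ⟨ihs, ihm⟩ := ih (mnv B) hk p1 (by rw [hPp1]; omega)
        rw [hPp1, hRp1] at ihs ihm
        rw [hanc]
        exact ⟨ihs, ihm⟩
      · -- B ∉ Φ : anchor B = B and mnv B = mnv C
        rw [anchor_not_mem hS hBS]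
        refine ⟨hBC, ?_⟩
        have h2 : mnv C ≤ mnv B := mnv_subset hBC (parts_nonempty hB)
        rw [PhiOf, mem_filter] at hBS
        push_neg at hBS
        have h3 := hBS hB x (mem_part' P x)
        rw [← hCdef] at h3
        omega
  intro x
  exact key (mnv (P.part x) + 1) x (Nat.lt_succ_self _)

lemma rho_phi (hP : IsNC P) (hR : IsNC R) (hLl : Ll P R) :
    rhoOf P (PhiOf P R) = R := by
  have hS := goodS_phi hLl
  apply fp_ext
  intro a b
  rw [rho_part_eq_iff]
  constructor
  · intro h
    obtain ⟨ha1, ha2⟩ := anchor_dist hP hR hLl a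
    obtain ⟨hb1, hb2⟩ := anchor_dist hP hR hLl b
    obtain ⟨hmem, -, -⟩ := anchor_basic hS (P.part a) (part_mem' P a)
    obtain ⟨z, hz⟩ := parts_nonempty hmem
    exact R.eq_of_mem_parts (part_mem' R a) (part_mem' R b) (ha1 hz) (hb1 (h ▸ hz))
  · intro h
    obtain ⟨ha1, ha2⟩ := anchor_dist hP hR hLl a
    obtain ⟨hb1, hb2⟩ := anchor_dist hP hR hLl b
    obtain ⟨hmema, -, -⟩ := anchor_basic hS (P.part a) (part_mem' P a)
    obtain ⟨hmemb, -, -⟩ := anchor_basic hS (P.part b) (part_mem' P b)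
    apply eq_of_mnv hmema hmemb
    rw [ha2, hb2, h]

end Phi

/-- Proposition 2.13: for `π ∈ NC(n)` and `|π|_out ≤ p ≤ |π|`, the
number of `ρ ∈ NC(n)` with `ρ ≫ π` and `|ρ| = p` is `C(|π| - |π|_out, p - |π|_out)`. -/
theorem statement1 (n : ℕ) (hn : 0 < n) (π : FP n) (hπ : IsNC π)
    (p : ℕ) (hp1 : numOuter π ≤ p) (hp2 : p ≤ π.parts.card) :
    {ρ : FP n | IsNC ρ ∧ Ll π ρ ∧ ρ.parts.card = p}.ncard =
      Nat.choose (π.parts.card - numOuter π) (p - numOuter π) := by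
  set Inn := π.parts.filter (fun B => ¬ IsOuter π B) with hInn
  have hInn_iff : ∀ B, B ∈ Inn ↔ B ∈ π.parts ∧ ∃ A ∈ π.parts, SE A B := by
    intro B
    rw [hInn, mem_filter]
    constructor
    · rintro ⟨h1, h2⟩; exact ⟨h1, (not_isOuter_iff h1).mp h2⟩
    · rintro ⟨h1, h2⟩; exact ⟨h1, (not_isOuter_iff h1).mpr h2⟩
  have hout_le : numOuter π ≤ π.parts.card := Finset.card_filter_le _ _
  have hInncard : Inn.card = π.parts.card - numOuter π := by
    have h := Finset.card_filter_add_card_filter_not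
      (s := π.parts) (p := fun A => IsOuter π A)
    have h2 : Inn.card + numOuter π = π.parts.card := by
      rw [hInn]; unfold numOuter; rw [add_comm]; exact h
    omega
  set q := π.parts.card - p with hq
  have hbij : Set.BijOn (fun ρ : FP n => PhiOf π ρ)
      {ρ : FP n | IsNC ρ ∧ Ll π ρ ∧ ρ.parts.card = p}
      ↑(Finset.powersetCard q Inn) := by
    refine ⟨?_, ?_, ?_⟩
    · rintro ρ ⟨h1, h2, h3⟩
      rw [Finset.mem_coe, Finset.mem_powersetCard]
      constructor
      · intro B hB
        rw [hInn_iff]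
        exact ⟨(Finset.mem_filter.mp hB).1, phi_subset_inner h2 B hB⟩
      · rw [phi_card h2, h3]
    · rintro ρ ⟨h1, h2, h3⟩ ρ' ⟨h1', h2', h3'⟩ heq
      dsimp only at heq
      rw [← rho_phi hπ h1 h2, ← rho_phi hπ h1' h2', heq]
    · rintro S hS
      rw [Finset.mem_coe, Finset.mem_powersetCard] at hS
      obtain ⟨hS1, hS2⟩ := hS
      have hgood : GoodS π S := by
        intro B hBS
        obtain ⟨hBp, A, hA, hSA⟩ := (hInn_iff B).mp (hS1 hBS)
        exact ⟨hBp, ⟨A, Finset.mem_filter.mpr ⟨hA, hSA⟩⟩⟩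
      have hSsub : S ⊆ π.parts := fun B hB => ((hInn_iff B).mp (hS1 hB)).1
      refine ⟨rhoOf π S, ⟨rho_NC hπ hgood, rho_Ll hgood, ?_⟩, ?_⟩
      · rw [rho_card hgood hSsub, hS2]
        have hScard : S.card ≤ Inn.card := Finset.card_le_card hS1
        omega
      · exact phi_rho hgood hSsub
  have h5 : {ρ : FP n | IsNC ρ ∧ Ll π ρ ∧ ρ.parts.card = p}.ncard
      = (Finset.powersetCard q Inn).card := by
    rw [← Set.ncard_coe_finset, ← hbij.image_eq, Set.ncard_image_of_injOn hbij.injOn]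
  rw [h5, Finset.card_powersetCard, hInncard]
  have harith : p - numOuter π = (π.parts.card - numOuter π) - q := by omega
  rw [harith]
  exact (Nat.choose_symm (by omega)).symm
end BBP
end

section
/- Let k be a positive integer, let μ ∈ D_alg(k), and set f = R_μ and g = η_μ. Then for every n ≥ 1 and all i₁,…,i_n ∈ {1,…,k}: Cf_{(i₁,…,i_n)}(g) = Σ_{π ∈ NC(n), π ≪ 1_n} Cf_{(i₁,…,i_n);π}(f). -/
open Finset

attribute [local instance] Classical.propDecidable

open scoped ComplexOrder

namespace BBP

/-! ### Auxiliary development for statement4 -/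

section Aux

lemma FP_ext {m : ℕ} {π ρ : FP m} (h : π.parts = ρ.parts) : π = ρ := by
  cases π; cases ρ; simpa using h

lemma partCoeff_eq_orderEmb {k m : ℕ} (f : NCSeries k) (w : Fin (m+1) → Fin k)
    {B : Finset (Fin (m+1))} {c : ℕ} (hc : B.card = c + 1) :
    partCoeff f w B = f c (fun j => w (B.orderEmbOfFin hc j)) := by
  have h : B.Nonempty := Finset.card_pos.mp (by omega)
  obtain rfl : c = B.card - 1 := by omega
  rw [partCoeff, dif_pos h]
  congr 1

lemma partCoeff_image {k m m' : ℕ} (f : NCSeries k) (w : Fin (m+1) → Fin k)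
    {e : Fin (m'+1) → Fin (m+1)} (he : StrictMono e) (B : Finset (Fin (m'+1))) :
    partCoeff f w (B.image e) = partCoeff f (fun x => w (e x)) B := by
  by_cases h : B.Nonempty
  · obtain ⟨c, hc⟩ : ∃ c, B.card = c + 1 := ⟨B.card - 1, by have := Finset.card_pos.mpr h; omega⟩
    have hc' : (B.image e).card = c + 1 := by
      rw [Finset.card_image_of_injective _ he.injective, hc]
    rw [partCoeff_eq_orderEmb f w hc', partCoeff_eq_orderEmb f _ hc]
    have key : (fun j => e (B.orderEmbOfFin hc j)) = (B.image e).orderEmbOfFin hc' := by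
      apply Finset.orderEmbOfFin_unique
      · exact fun x => Finset.mem_image_of_mem e (Finset.orderEmbOfFin_mem B hc x)
      · exact he.comp (B.orderEmbOfFin hc).strictMono
    rw [← key]
  · rw [Finset.not_nonempty_iff_eq_empty] at h
    subst h
    simp [partCoeff]

lemma partCoeff_univ {k m : ℕ} (f : NCSeries k) (w : Fin (m+1) → Fin k) :
    partCoeff f w (Finset.univ : Finset (Fin (m+1))) = f m w := by
  have hc : (Finset.univ : Finset (Fin (m+1))).card = m + 1 := Finset.card_fin _
  rw [partCoeff_eq_orderEmb f w hc]
  have key : (fun j : Fin (m+1) => j) = (Finset.univ : Finset (Fin (m+1))).orderEmbOfFin hc := by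
    apply Finset.orderEmbOfFin_unique
    · exact fun x => Finset.mem_univ x
    · exact strictMono_id
  rw [← key]

lemma fullPart_parts (n : ℕ) : (fullPart n).parts = {Finset.univ} := rfl

lemma genCoeff_fullPart {k n : ℕ} (f : NCSeries k) (w : Fin (n+1) → Fin k) :
    genCoeff f w (fullPart n) = f n w := by
  rw [genCoeff, fullPart_parts, Finset.prod_singleton, partCoeff_univ]

lemma Ll_fullPart_iff {n : ℕ} (π : FP (n+1)) :
    Ll π (fullPart n) ↔ ∃ B ∈ π.parts, (0 : Fin (n+1)) ∈ B ∧ Fin.last n ∈ B := by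
  constructor
  · rintro ⟨-, h2⟩
    obtain ⟨B, hB, x, y, hx, hy, hxB, hyB⟩ := h2 Finset.univ (by simp [fullPart_parts])
    have hx0 : x = 0 := le_antisymm (hx.2 0 (Finset.mem_univ _)) (Fin.zero_le x)
    have hyl : y = Fin.last n := le_antisymm (Fin.le_last y) (hy.2 (Fin.last n) (Finset.mem_univ _))
    exact ⟨B, hB, hx0 ▸ hxB, hyl ▸ hyB⟩
  · rintro ⟨B, hB, h0, hl⟩
    refine ⟨fun B' _ => ⟨Finset.univ, by simp [fullPart_parts], Finset.subset_univ _⟩, ?_⟩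
    intro C hC
    rw [fullPart_parts, Finset.mem_singleton] at hC
    subst hC
    exact ⟨B, hB, 0, Fin.last n, ⟨Finset.mem_univ _, fun y _ => Fin.zero_le y⟩,
      ⟨Finset.mem_univ _, fun y _ => Fin.le_last y⟩, h0, hl⟩

end Aux

section Split

/-- a block lies entirely in `{0,…,j}`. -/
def lowSide {n : ℕ} (j : ℕ) (B : Finset (Fin (n+1))) : Prop := ∀ x ∈ B, x.val ≤ j

/-- a block lies entirely in `{j+1,…,n}`. -/
def highSide {n : ℕ} (j : ℕ) (B : Finset (Fin (n+1))) : Prop := ∀ x ∈ B, j < x.val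

/-- every block of `π` is on one side of the cut after `j`. -/
def SplitsAt {n : ℕ} (j : ℕ) (π : FP (n+1)) : Prop :=
  ∀ B ∈ π.parts, lowSide j B ∨ highSide j B

variable {n : ℕ}

def e1 (n j : ℕ) (hj : j < n) (x : Fin (j+1)) : Fin (n+1) :=
  ⟨x.val, by have := x.isLt; omega⟩

def e2 (n j : ℕ) (hj : j < n) (x : Fin (n-1-j+1)) : Fin (n+1) :=
  ⟨j + 1 + x.val, by have := x.isLt; omega⟩

lemma e1_strictMono {j : ℕ} (hj : j < n) : StrictMono (e1 n j hj) := by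
  intro a b hab
  exact Fin.mk_lt_mk.mpr (Fin.lt_def.mp hab)

lemma e2_strictMono {j : ℕ} (hj : j < n) : StrictMono (e2 n j hj) := by
  intro a b hab
  refine Fin.mk_lt_mk.mpr ?_
  have := Fin.lt_def.mp hab
  omega

lemma e1_inj {j : ℕ} (hj : j < n) : Function.Injective (e1 n j hj) :=
  (e1_strictMono hj).injective

lemma e2_inj {j : ℕ} (hj : j < n) : Function.Injective (e2 n j hj) :=
  (e2_strictMono hj).injective

lemma e1_val {j : ℕ} (hj : j < n) (x : Fin (j+1)) : (e1 n j hj x).val = x.val := rfl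

lemma e2_val {j : ℕ} (hj : j < n) (x : Fin (n-1-j+1)) : (e2 n j hj x).val = j + 1 + x.val := rfl

lemma exists_e1 {j : ℕ} (hj : j < n) {x : Fin (n+1)} (hx : x.val ≤ j) :
    ∃ y, e1 n j hj y = x :=
  ⟨⟨x.val, by omega⟩, by apply Fin.ext; rfl⟩

lemma exists_e2 {j : ℕ} (hj : j < n) {x : Fin (n+1)} (hx : j < x.val) :
    ∃ y, e2 n j hj y = x := by
  refine ⟨⟨x.val - (j+1), by have := x.isLt; omega⟩, Fin.ext ?_⟩
  simp only [e2_val]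
  omega

lemma mem_image_e1_val {j : ℕ} (hj : j < n) {B : Finset (Fin (j+1))} {x : Fin (n+1)}
    (hx : x ∈ B.image (e1 n j hj)) : x.val ≤ j := by
  obtain ⟨y, -, rfl⟩ := Finset.mem_image.mp hx
  have := y.isLt; simp [e1_val]; omega

lemma mem_image_e2_val {j : ℕ} (hj : j < n) {B : Finset (Fin (n-1-j+1))} {x : Fin (n+1)}
    (hx : x ∈ B.image (e2 n j hj)) : j < x.val := by
  obtain ⟨y, -, rfl⟩ := Finset.mem_image.mp hx
  simp [e2_val]; omega

/-- Glue a partition of the low side and a partition of the high side. -/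
noncomputable def glue (n j : ℕ) (hj : j < n) (π₁ : FP (j+1)) (π₂ : FP (n-1-j+1)) :
    FP (n+1) where
  parts := π₁.parts.image (fun B => B.image (e1 n j hj)) ∪
    π₂.parts.image (fun B => B.image (e2 n j hj))
  supIndep := by
    rw [Finset.supIndep_iff_pairwiseDisjoint]
    intro A hA B hB hne
    show Disjoint A B
    simp only [Finset.coe_union, Finset.coe_image, Set.mem_union, Set.mem_image,
      Finset.mem_coe] at hA hB
    rw [Finset.disjoint_left]
    intro x hxA hxB
    rcases hA with ⟨A', hA', rfl⟩ | ⟨A', hA', rfl⟩ <;>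
      rcases hB with ⟨B', hB', rfl⟩ | ⟨B', hB', rfl⟩
    · have hAB : A' ≠ B' := fun h => hne (by rw [h])
      have := π₁.disjoint hA' hB' hAB
      obtain ⟨a, haA, rfl⟩ := Finset.mem_image.mp hxA
      obtain ⟨b, hbB, hba⟩ := Finset.mem_image.mp hxB
      have : b = a := e1_inj hj hba
      subst this
      exact (Finset.disjoint_left.mp this) haA hbB
    · have h1 := mem_image_e1_val hj hxA
      have h2 := mem_image_e2_val hj hxB
      omega
    · have h1 := mem_image_e2_val hj hxA
      have h2 := mem_image_e1_val hj hxB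
      omega
    · have hAB : A' ≠ B' := fun h => hne (by rw [h])
      have := π₂.disjoint hA' hB' hAB
      obtain ⟨a, haA, rfl⟩ := Finset.mem_image.mp hxA
      obtain ⟨b, hbB, hba⟩ := Finset.mem_image.mp hxB
      have : b = a := e2_inj hj hba
      subst this
      exact (Finset.disjoint_left.mp this) haA hbB
  sup_parts := by
    apply le_antisymm
    · exact Finset.sup_le fun B _ => Finset.subset_univ B
    · intro x _
      rw [Finset.mem_sup]
      by_cases hx : x.val ≤ j
      · obtain ⟨y, hy⟩ := exists_e1 hj hx
        obtain ⟨B, hB, hyB⟩ := π₁.exists_mem (Finset.mem_univ y)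
        exact ⟨B.image (e1 n j hj),
          Finset.mem_union_left _ (Finset.mem_image_of_mem _ hB),
          hy ▸ Finset.mem_image_of_mem _ hyB⟩
      · obtain ⟨y, hy⟩ := exists_e2 (x := x) hj (by omega)
        obtain ⟨B, hB, hyB⟩ := π₂.exists_mem (Finset.mem_univ y)
        exact ⟨B.image (e2 n j hj),
          Finset.mem_union_right _ (Finset.mem_image_of_mem _ hB),
          hy ▸ Finset.mem_image_of_mem _ hyB⟩
  bot_notMem := by
    intro h
    rcases Finset.mem_union.mp h with h' | h'
    · obtain ⟨B, hB, hBe⟩ := Finset.mem_image.mp h'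
      have := π₁.nonempty_of_mem_parts hB
      rw [show ((⊥ : Finset (Fin (n+1))) = ∅) from rfl] at hBe
      rw [Finset.image_eq_empty] at hBe
      rw [hBe] at this
      exact Finset.not_nonempty_empty this
    · obtain ⟨B, hB, hBe⟩ := Finset.mem_image.mp h'
      have := π₂.nonempty_of_mem_parts hB
      rw [show ((⊥ : Finset (Fin (n+1))) = ∅) from rfl] at hBe
      rw [Finset.image_eq_empty] at hBe
      rw [hBe] at this
      exact Finset.not_nonempty_empty this

lemma glue_parts {j : ℕ} (hj : j < n) (π₁ : FP (j+1)) (π₂ : FP (n-1-j+1)) :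
    (glue n j hj π₁ π₂).parts = π₁.parts.image (fun B => B.image (e1 n j hj)) ∪
      π₂.parts.image (fun B => B.image (e2 n j hj)) := rfl

lemma splitsAt_glue {j : ℕ} (hj : j < n) (π₁ : FP (j+1)) (π₂ : FP (n-1-j+1)) :
    SplitsAt j (glue n j hj π₁ π₂) := by
  intro B hB
  rw [glue_parts] at hB
  rcases Finset.mem_union.mp hB with h | h
  · obtain ⟨B', hB', rfl⟩ := Finset.mem_image.mp h
    exact Or.inl fun x hx => mem_image_e1_val hj hx
  · obtain ⟨B', hB', rfl⟩ := Finset.mem_image.mp h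
    exact Or.inr fun x hx => mem_image_e2_val hj hx

end Split

section Res

variable {n : ℕ}

lemma image_preimage_e1 {j : ℕ} (hj : j < n) {B : Finset (Fin (n+1))} (hB : lowSide j B) :
    (B.preimage (e1 n j hj) ((e1_inj hj).injOn.mono (Set.subset_univ _))).image (e1 n j hj)
      = B := by
  ext x
  simp only [Finset.mem_image, Finset.mem_preimage]
  constructor
  · rintro ⟨y, hy, rfl⟩; exact hy
  · intro hx
    obtain ⟨y, rfl⟩ := exists_e1 hj (hB x hx)
    exact ⟨y, hx, rfl⟩

lemma image_preimage_e2 {j : ℕ} (hj : j < n) {B : Finset (Fin (n+1))} (hB : highSide j B) :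
    (B.preimage (e2 n j hj) ((e2_inj hj).injOn.mono (Set.subset_univ _))).image (e2 n j hj)
      = B := by
  ext x
  simp only [Finset.mem_image, Finset.mem_preimage]
  constructor
  · rintro ⟨y, hy, rfl⟩; exact hy
  · intro hx
    obtain ⟨y, rfl⟩ := exists_e2 (x := x) hj (hB x hx)
    exact ⟨y, hx, rfl⟩

lemma preimage_image_e1 {j : ℕ} (hj : j < n) (B : Finset (Fin (j+1))) :
    (B.image (e1 n j hj)).preimage (e1 n j hj)
      ((e1_inj hj).injOn.mono (Set.subset_univ _)) = B := by
  ext x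
  simp only [Finset.mem_preimage, Finset.mem_image]
  constructor
  · rintro ⟨y, hy, hyx⟩
    rwa [e1_inj hj hyx] at hy
  · intro hx; exact ⟨x, hx, rfl⟩

lemma preimage_image_e2 {j : ℕ} (hj : j < n) (B : Finset (Fin (n-1-j+1))) :
    (B.image (e2 n j hj)).preimage (e2 n j hj)
      ((e2_inj hj).injOn.mono (Set.subset_univ _)) = B := by
  ext x
  simp only [Finset.mem_preimage, Finset.mem_image]
  constructor
  · rintro ⟨y, hy, hyx⟩
    rwa [e2_inj hj hyx] at hy
  · intro hx; exact ⟨x, hx, rfl⟩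

/-- Restriction of a split partition to the low side. -/
noncomputable def res1 (n j : ℕ) (hj : j < n) (π : FP (n+1)) (h : SplitsAt j π) :
    FP (j+1) where
  parts := (π.parts.filter (fun B => lowSide j B)).image
    (fun B => B.preimage (e1 n j hj) ((e1_inj hj).injOn.mono (Set.subset_univ _)))
  supIndep := by
    rw [Finset.supIndep_iff_pairwiseDisjoint]
    intro A hA B hB hne
    show Disjoint A B
    simp only [Finset.coe_image, Set.mem_image, Finset.mem_coe, Finset.mem_filter] at hA hB
    obtain ⟨A', ⟨hA', -⟩, rfl⟩ := hA
    obtain ⟨B', ⟨hB', -⟩, rfl⟩ := hB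
    have hAB : A' ≠ B' := fun hcon => hne (by rw [hcon])
    have hd : Disjoint A' B' := π.disjoint hA' hB' hAB
    rw [Finset.disjoint_left] at hd ⊢
    intro x hxA hxB
    exact hd (Finset.mem_preimage.mp hxA) (Finset.mem_preimage.mp hxB)
  sup_parts := by
    apply le_antisymm
    · exact Finset.sup_le fun B _ => Finset.subset_univ B
    · intro x _
      rw [Finset.mem_sup]
      obtain ⟨B, hB, hxB⟩ := π.exists_mem (Finset.mem_univ (e1 n j hj x))
      have hlow : lowSide j B := by
        rcases h B hB with hl | hh
        · exact hl
        · exfalso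
          have := hh _ hxB
          rw [e1_val] at this
          have := x.isLt
          omega
      exact ⟨B.preimage (e1 n j hj) ((e1_inj hj).injOn.mono (Set.subset_univ _)),
        Finset.mem_image_of_mem _ (Finset.mem_filter.mpr ⟨hB, hlow⟩),
        Finset.mem_preimage.mpr hxB⟩
  bot_notMem := by
    intro hmem
    obtain ⟨B, hB, hBe⟩ := Finset.mem_image.mp hmem
    rw [Finset.mem_filter] at hB
    obtain ⟨b, hb⟩ := π.nonempty_of_mem_parts hB.1
    obtain ⟨y, hy⟩ := exists_e1 hj (hB.2 b hb)
    have : y ∈ (⊥ : Finset (Fin (j+1))) := by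
      rw [← hBe]
      exact Finset.mem_preimage.mpr (hy ▸ hb)
    simp at this

/-- Restriction of a split partition to the high side. -/
noncomputable def res2 (n j : ℕ) (hj : j < n) (π : FP (n+1)) (h : SplitsAt j π) :
    FP (n-1-j+1) where
  parts := (π.parts.filter (fun B => highSide j B)).image
    (fun B => B.preimage (e2 n j hj) ((e2_inj hj).injOn.mono (Set.subset_univ _)))
  supIndep := by
    rw [Finset.supIndep_iff_pairwiseDisjoint]
    intro A hA B hB hne
    show Disjoint A B
    simp only [Finset.coe_image, Set.mem_image, Finset.mem_coe, Finset.mem_filter] at hA hB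
    obtain ⟨A', ⟨hA', -⟩, rfl⟩ := hA
    obtain ⟨B', ⟨hB', -⟩, rfl⟩ := hB
    have hAB : A' ≠ B' := fun hcon => hne (by rw [hcon])
    have hd : Disjoint A' B' := π.disjoint hA' hB' hAB
    rw [Finset.disjoint_left] at hd ⊢
    intro x hxA hxB
    exact hd (Finset.mem_preimage.mp hxA) (Finset.mem_preimage.mp hxB)
  sup_parts := by
    apply le_antisymm
    · exact Finset.sup_le fun B _ => Finset.subset_univ B
    · intro x _
      rw [Finset.mem_sup]
      obtain ⟨B, hB, hxB⟩ := π.exists_mem (Finset.mem_univ (e2 n j hj x))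
      have hhigh : highSide j B := by
        rcases h B hB with hl | hh
        · exfalso
          have := hl _ hxB
          rw [e2_val] at this
          omega
        · exact hh
      exact ⟨B.preimage (e2 n j hj) ((e2_inj hj).injOn.mono (Set.subset_univ _)),
        Finset.mem_image_of_mem _ (Finset.mem_filter.mpr ⟨hB, hhigh⟩),
        Finset.mem_preimage.mpr hxB⟩
  bot_notMem := by
    intro hmem
    obtain ⟨B, hB, hBe⟩ := Finset.mem_image.mp hmem
    rw [Finset.mem_filter] at hB
    obtain ⟨b, hb⟩ := π.nonempty_of_mem_parts hB.1
    obtain ⟨y, hy⟩ := exists_e2 (x := b) hj (hB.2 b hb)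
    have : y ∈ (⊥ : Finset (Fin (n-1-j+1))) := by
      rw [← hBe]
      exact Finset.mem_preimage.mpr (hy ▸ hb)
    simp at this

lemma res1_parts {j : ℕ} (hj : j < n) (π : FP (n+1)) (h : SplitsAt j π) :
    (res1 n j hj π h).parts = (π.parts.filter (fun B => lowSide j B)).image
      (fun B => B.preimage (e1 n j hj) ((e1_inj hj).injOn.mono (Set.subset_univ _))) := rfl

lemma res2_parts {j : ℕ} (hj : j < n) (π : FP (n+1)) (h : SplitsAt j π) :
    (res2 n j hj π h).parts = (π.parts.filter (fun B => highSide j B)).image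
      (fun B => B.preimage (e2 n j hj) ((e2_inj hj).injOn.mono (Set.subset_univ _))) := rfl

lemma glue_res {j : ℕ} (hj : j < n) (π : FP (n+1)) (h : SplitsAt j π) :
    glue n j hj (res1 n j hj π h) (res2 n j hj π h) = π := by
  apply FP_ext
  rw [glue_parts, res1_parts, res2_parts, Finset.image_image, Finset.image_image]
  have h1 : ∀ B ∈ π.parts.filter (fun B => lowSide j B),
      ((fun B => B.image (e1 n j hj)) ∘
        (fun B => B.preimage (e1 n j hj) ((e1_inj hj).injOn.mono (Set.subset_univ _)))) B = B :=
    fun B hB => image_preimage_e1 hj (Finset.mem_filter.mp hB).2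
  have h2 : ∀ B ∈ π.parts.filter (fun B => highSide j B),
      ((fun B => B.image (e2 n j hj)) ∘
        (fun B => B.preimage (e2 n j hj) ((e2_inj hj).injOn.mono (Set.subset_univ _)))) B = B :=
    fun B hB => image_preimage_e2 hj (Finset.mem_filter.mp hB).2
  rw [Finset.image_congr h1, Finset.image_congr h2, Finset.image_id', Finset.image_id']
  ext B
  simp only [Finset.mem_union, Finset.mem_filter]
  constructor
  · rintro (⟨hB, -⟩ | ⟨hB, -⟩) <;> exact hB
  · intro hB
    rcases h B hB with hl | hh
    · exact Or.inl ⟨hB, hl⟩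
    · exact Or.inr ⟨hB, hh⟩

lemma res1_glue {j : ℕ} (hj : j < n) (π₁ : FP (j+1)) (π₂ : FP (n-1-j+1)) :
    res1 n j hj (glue n j hj π₁ π₂) (splitsAt_glue hj π₁ π₂) = π₁ := by
  apply FP_ext
  rw [res1_parts, glue_parts]
  have hfl : (π₁.parts.image (fun B => B.image (e1 n j hj)) ∪
      π₂.parts.image (fun B => B.image (e2 n j hj))).filter (fun B => lowSide j B)
      = π₁.parts.image (fun B => B.image (e1 n j hj)) := by
    ext B
    simp only [Finset.mem_filter, Finset.mem_union]
    constructor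
    · rintro ⟨hB | hB, hlow⟩
      · exact hB
      · exfalso
        obtain ⟨B', hB', rfl⟩ := Finset.mem_image.mp hB
        obtain ⟨b, hb⟩ := π₂.nonempty_of_mem_parts hB'
        have h1 := hlow _ (Finset.mem_image_of_mem _ hb)
        have h2 := mem_image_e2_val hj (Finset.mem_image_of_mem (e2 n j hj) hb)
        omega
    · intro hB
      obtain ⟨B', hB', rfl⟩ := Finset.mem_image.mp hB
      exact ⟨Or.inl (Finset.mem_image_of_mem _ hB'), fun x hx => mem_image_e1_val hj hx⟩
  rw [hfl, Finset.image_image]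
  have : ∀ B ∈ π₁.parts,
      ((fun B => B.preimage (e1 n j hj) ((e1_inj hj).injOn.mono (Set.subset_univ _))) ∘
        (fun B => B.image (e1 n j hj))) B = B :=
    fun B _ => preimage_image_e1 hj B
  rw [Finset.image_congr this, Finset.image_id']

lemma res2_glue {j : ℕ} (hj : j < n) (π₁ : FP (j+1)) (π₂ : FP (n-1-j+1)) :
    res2 n j hj (glue n j hj π₁ π₂) (splitsAt_glue hj π₁ π₂) = π₂ := by
  apply FP_ext
  rw [res2_parts, glue_parts]
  have hfl : (π₁.parts.image (fun B => B.image (e1 n j hj)) ∪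
      π₂.parts.image (fun B => B.image (e2 n j hj))).filter (fun B => highSide j B)
      = π₂.parts.image (fun B => B.image (e2 n j hj)) := by
    ext B
    simp only [Finset.mem_filter, Finset.mem_union]
    constructor
    · rintro ⟨hB | hB, hhigh⟩
      · exfalso
        obtain ⟨B', hB', rfl⟩ := Finset.mem_image.mp hB
        obtain ⟨b, hb⟩ := π₁.nonempty_of_mem_parts hB'
        have h1 := hhigh _ (Finset.mem_image_of_mem _ hb)
        have h2 := mem_image_e1_val hj (Finset.mem_image_of_mem (e1 n j hj) hb)
        omega
      · exact hB
    · intro hB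
      obtain ⟨B', hB', rfl⟩ := Finset.mem_image.mp hB
      exact ⟨Or.inr (Finset.mem_image_of_mem _ hB'), fun x hx => mem_image_e2_val hj hx⟩
  rw [hfl, Finset.image_image]
  have : ∀ B ∈ π₂.parts,
      ((fun B => B.preimage (e2 n j hj) ((e2_inj hj).injOn.mono (Set.subset_univ _))) ∘
        (fun B => B.image (e2 n j hj))) B = B :=
    fun B _ => preimage_image_e2 hj B
  rw [Finset.image_congr this, Finset.image_id']

lemma genCoeff_glue {k j : ℕ} (hj : j < n) (s : NCSeries k) (w : Fin (n+1) → Fin k)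
    (π₁ : FP (j+1)) (π₂ : FP (n-1-j+1)) :
    genCoeff s w (glue n j hj π₁ π₂)
      = genCoeff s (fun x => w (e1 n j hj x)) π₁ * genCoeff s (fun x => w (e2 n j hj x)) π₂ := by
  rw [genCoeff, glue_parts]
  rw [Finset.prod_union]
  · congr 1
    · rw [Finset.prod_image]
      · exact Finset.prod_congr rfl fun B _ => partCoeff_image s w (e1_strictMono hj) B
      · intro A hA B hB hAB
        have := congrArg (fun C => Finset.preimage C (e1 n j hj)
          ((e1_inj hj).injOn.mono (Set.subset_univ _))) hAB
        simpa [preimage_image_e1 hj] using this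
    · rw [Finset.prod_image]
      · exact Finset.prod_congr rfl fun B _ => partCoeff_image s w (e2_strictMono hj) B
      · intro A hA B hB hAB
        have := congrArg (fun C => Finset.preimage C (e2 n j hj)
          ((e2_inj hj).injOn.mono (Set.subset_univ _))) hAB
        simpa [preimage_image_e2 hj] using this
  · rw [Finset.disjoint_left]
    rintro A hA1 hA2
    obtain ⟨A', hA', rfl⟩ := Finset.mem_image.mp hA1
    obtain ⟨B', hB', hBA⟩ := Finset.mem_image.mp hA2
    obtain ⟨a, ha⟩ := π₁.nonempty_of_mem_parts hA'
    have h1 : (e1 n j hj a).val ≤ j := mem_image_e1_val hj (Finset.mem_image_of_mem _ ha)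
    have h2 : j < (e1 n j hj a).val := mem_image_e2_val hj
      (hBA ▸ Finset.mem_image_of_mem (e1 n j hj) ha)
    omega

end Res

section Cmax

lemma part0_nonempty {m : ℕ} (π : FP (m+1)) : (π.part 0).Nonempty :=
  ⟨0, π.mem_part (Finset.mem_univ 0)⟩

/-- the value of the maximum of the block containing `0`. -/
noncomputable def cmax {m : ℕ} (π : FP (m+1)) : ℕ :=
  ((π.part 0).max' (part0_nonempty π)).val

lemma cmax_le {m : ℕ} (π : FP (m+1)) : cmax π ≤ m := by
  have := ((π.part 0).max' (part0_nonempty π)).isLt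
  unfold cmax
  omega

lemma cmax_spec {m : ℕ} (π : FP (m+1)) : ∃ x ∈ π.part 0, x.val = cmax π :=
  ⟨(π.part 0).max' (part0_nonempty π), (π.part 0).max'_mem (part0_nonempty π), rfl⟩

lemma le_cmax {m : ℕ} (π : FP (m+1)) {x : Fin (m+1)} (hx : x ∈ π.part 0) : x.val ≤ cmax π :=
  (π.part 0).le_max' x hx

lemma cmax_eq_top_iff {m : ℕ} (π : FP (m+1)) : cmax π = m ↔ Ll π (fullPart m) := by
  rw [Ll_fullPart_iff]
  constructor
  · intro hc
    obtain ⟨x, hx, hxv⟩ := cmax_spec π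
    have hxl : x = Fin.last m := Fin.ext (by rw [hxv, hc]; rfl)
    exact ⟨π.part 0, π.part_mem.mpr (Finset.mem_univ 0), π.mem_part (Finset.mem_univ 0), hxl ▸ hx⟩
  · rintro ⟨B, hB, h0, hl⟩
    have hBp : π.part 0 = B := π.part_eq_of_mem hB h0
    have h1 : m ≤ cmax π := by
      have := le_cmax π (x := Fin.last m) (hBp ▸ hl)
      simpa using this
    have := cmax_le π
    omega

lemma sum_fiber {k n : ℕ} (s : NCSeries k) (w : Fin (n+1) → Fin k) (Q : FP (n+1) → Prop) :
    ∑ π : FP (n+1), (if Q π then genCoeff s w π else 0)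
      = ∑ j ∈ Finset.range (n+1),
          ∑ π ∈ Finset.univ.filter (fun π : FP (n+1) => Q π ∧ cmax π = j),
            genCoeff s w π := by
  rw [← Finset.sum_filter]
  rw [← Finset.sum_fiberwise_of_maps_to (g := cmax) (t := Finset.range (n+1))
    (fun π _ => Finset.mem_range.mpr (by have := cmax_le π; omega)) (genCoeff s w)]
  apply Finset.sum_congr rfl
  intro j _
  congr 1
  rw [Finset.filter_filter]

lemma fiber_top {k n : ℕ} (s : NCSeries k) (w : Fin (n+1) → Fin k) (Q : FP (n+1) → Prop) :
    ∑ π ∈ Finset.univ.filter (fun π : FP (n+1) => Q π ∧ cmax π = n), genCoeff s w π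
      = ∑ π : FP (n+1), (if Q π ∧ Ll π (fullPart n) then genCoeff s w π else 0) := by
  rw [Finset.sum_filter]
  apply Finset.sum_congr rfl
  intro π _
  exact if_congr (and_congr Iff.rfl (cmax_eq_top_iff π)) rfl rfl

lemma cmax_glue {n j : ℕ} (hj : j < n) (π₁ : FP (j+1)) (π₂ : FP (n-1-j+1))
    (hLl : Ll π₁ (fullPart j)) : cmax (glue n j hj π₁ π₂) = j := by
  rw [Ll_fullPart_iff] at hLl
  obtain ⟨B, hB, h0, hl⟩ := hLl
  have he0 : e1 n j hj 0 = 0 := Fin.ext rfl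
  have hmem : B.image (e1 n j hj) ∈ (glue n j hj π₁ π₂).parts := by
    rw [glue_parts]
    exact Finset.mem_union_left _ (Finset.mem_image_of_mem _ hB)
  have hpart : (glue n j hj π₁ π₂).part 0 = B.image (e1 n j hj) :=
    (glue n j hj π₁ π₂).part_eq_of_mem hmem (he0 ▸ Finset.mem_image_of_mem _ h0)
  apply le_antisymm
  · obtain ⟨x, hx, hxv⟩ := cmax_spec (glue n j hj π₁ π₂)
    rw [hpart] at hx
    rw [← hxv]
    exact mem_image_e1_val hj hx
  · have : (e1 n j hj (Fin.last j)).val ≤ cmax (glue n j hj π₁ π₂) :=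
      le_cmax _ (hpart ▸ Finset.mem_image_of_mem _ hl)
    simpa [e1_val] using this

lemma fiber_eq {k n j : ℕ} (hj : j < n) (s : NCSeries k) (w : Fin (n+1) → Fin k)
    (Q : FP (n+1) → Prop) (Q1 : FP (j+1) → Prop) (Q2 : FP (n-1-j+1) → Prop)
    (hsplit : ∀ π, Q π → cmax π = j → SplitsAt j π)
    (hglue : ∀ π₁ π₂, Q (glue n j hj π₁ π₂) ↔ Q1 π₁ ∧ Q2 π₂) :
    ∑ π ∈ Finset.univ.filter (fun π : FP (n+1) => Q π ∧ cmax π = j), genCoeff s w π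
      = (∑ π₁ : FP (j+1), if Q1 π₁ ∧ Ll π₁ (fullPart j) then
          genCoeff s (fun x => w (e1 n j hj x)) π₁ else 0)
        * (∑ π₂ : FP (n-1-j+1), if Q2 π₂ then
          genCoeff s (fun x => w (e2 n j hj x)) π₂ else 0) := by
  rw [Fintype.sum_mul_sum]
  simp only [ite_zero_mul_ite_zero]
  rw [← Finset.sum_product' (s := Finset.univ) (t := Finset.univ)]
  rw [Finset.univ_product_univ]
  rw [← Finset.sum_filter]
  set t := Finset.univ.filter
    (fun p : FP (j+1) × FP (n-1-j+1) =>
      (Q1 p.1 ∧ Ll p.1 (fullPart j)) ∧ Q2 p.2) with ht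
  apply Finset.sum_nbij'
    (i := fun π => ((if h : SplitsAt j π then res1 n j hj π h else fullPart j),
      (if h : SplitsAt j π then res2 n j hj π h else fullPart (n-1-j))))
    (j := fun p => glue n j hj p.1 p.2)
  · -- hi : maps into t
    intro π hπ
    rw [Finset.mem_filter] at hπ
    obtain ⟨-, hQ, hc⟩ := hπ
    have hs : SplitsAt j π := hsplit π hQ hc
    rw [dif_pos hs, dif_pos hs, ht, Finset.mem_filter]
    refine ⟨Finset.mem_univ _, ⟨?_, ?_⟩, ?_⟩
    · exact ((hglue _ _).mp (by rw [glue_res hj π hs]; exact hQ)).1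
    · -- Ll (res1 π hs) (fullPart j)
      rw [Ll_fullPart_iff]
      have hlow : lowSide j (π.part 0) := by
        rcases hs _ (π.part_mem.mpr (Finset.mem_univ 0)) with hl | hh
        · exact hl
        · exact absurd (hh 0 (π.mem_part (Finset.mem_univ 0))) (by simp)
      refine ⟨(π.part 0).preimage (e1 n j hj) ((e1_inj hj).injOn.mono (Set.subset_univ _)),
        ?_, ?_, ?_⟩
      · rw [res1_parts]
        exact Finset.mem_image_of_mem _
          (Finset.mem_filter.mpr ⟨π.part_mem.mpr (Finset.mem_univ 0), hlow⟩)
      · refine Finset.mem_preimage.mpr ?_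
        have : e1 n j hj 0 = 0 := Fin.ext rfl
        rw [this]
        exact π.mem_part (Finset.mem_univ 0)
      · refine Finset.mem_preimage.mpr ?_
        obtain ⟨x, hx, hxv⟩ := cmax_spec π
        have : e1 n j hj (Fin.last j) = x := Fin.ext (by rw [e1_val]; simp [hxv, hc])
        rw [this]
        exact hx
    · exact ((hglue _ _).mp (by rw [glue_res hj π hs]; exact hQ)).2
  · -- hj : glue maps into filter
    intro p hp
    rw [ht, Finset.mem_filter] at hp
    obtain ⟨-, ⟨hQ1, hLl⟩, hQ2⟩ := hp
    rw [Finset.mem_filter]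
    exact ⟨Finset.mem_univ _, (hglue _ _).mpr ⟨hQ1, hQ2⟩, cmax_glue hj p.1 p.2 hLl⟩
  · -- left_inv
    intro π hπ
    rw [Finset.mem_filter] at hπ
    have hs : SplitsAt j π := hsplit π hπ.2.1 hπ.2.2
    simp only [dif_pos hs]
    exact glue_res hj π hs
  · -- right_inv
    intro p hp
    have hs : SplitsAt j (glue n j hj p.1 p.2) := splitsAt_glue hj p.1 p.2
    simp only [dif_pos hs]
    exact Prod.ext (res1_glue hj p.1 p.2) (res2_glue hj p.1 p.2)
  · -- values
    intro π hπ
    rw [Finset.mem_filter] at hπ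
    have hs : SplitsAt j π := hsplit π hπ.2.1 hπ.2.2
    simp only [dif_pos hs]
    conv_lhs => rw [← glue_res hj π hs]
    exact genCoeff_glue hj s w _ _

end Cmax

section Instances

variable {n : ℕ}

lemma mem_glue_parts {j : ℕ} (hj : j < n) {π₁ : FP (j+1)} {π₂ : FP (n-1-j+1)}
    {B : Finset (Fin (n+1))} (hB : B ∈ (glue n j hj π₁ π₂).parts) :
    (∃ B₁ ∈ π₁.parts, B = B₁.image (e1 n j hj)) ∨
      (∃ B₂ ∈ π₂.parts, B = B₂.image (e2 n j hj)) := by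
  rw [glue_parts] at hB
  rcases Finset.mem_union.mp hB with h | h
  · obtain ⟨B₁, h1, rfl⟩ := Finset.mem_image.mp h; exact Or.inl ⟨B₁, h1, rfl⟩
  · obtain ⟨B₂, h2, rfl⟩ := Finset.mem_image.mp h; exact Or.inr ⟨B₂, h2, rfl⟩

lemma sameBlock_glue_e1 {j : ℕ} (hj : j < n) {π₁ : FP (j+1)} {π₂ : FP (n-1-j+1)}
    {x y : Fin (j+1)} :
    SameBlock (glue n j hj π₁ π₂) (e1 n j hj x) (e1 n j hj y) ↔ SameBlock π₁ x y := by
  constructor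
  · rintro ⟨B, hB, hx, hy⟩
    rcases mem_glue_parts hj hB with ⟨B₁, h1, rfl⟩ | ⟨B₂, h2, rfl⟩
    · obtain ⟨a, ha, hax⟩ := Finset.mem_image.mp hx
      obtain ⟨b, hb, hby⟩ := Finset.mem_image.mp hy
      exact ⟨B₁, h1, (e1_inj hj hax) ▸ ha, (e1_inj hj hby) ▸ hb⟩
    · exfalso
      have h1 := mem_image_e2_val hj hx
      have h2 : (e1 n j hj x).val ≤ j := by rw [e1_val]; have := x.isLt; omega
      omega
  · rintro ⟨B, hB, hx, hy⟩
    exact ⟨B.image (e1 n j hj),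
      by rw [glue_parts]; exact Finset.mem_union_left _ (Finset.mem_image_of_mem _ hB),
      Finset.mem_image_of_mem _ hx, Finset.mem_image_of_mem _ hy⟩

lemma sameBlock_glue_e2 {j : ℕ} (hj : j < n) {π₁ : FP (j+1)} {π₂ : FP (n-1-j+1)}
    {x y : Fin (n-1-j+1)} :
    SameBlock (glue n j hj π₁ π₂) (e2 n j hj x) (e2 n j hj y) ↔ SameBlock π₂ x y := by
  constructor
  · rintro ⟨B, hB, hx, hy⟩
    rcases mem_glue_parts hj hB with ⟨B₁, h1, rfl⟩ | ⟨B₂, h2, rfl⟩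
    · exfalso
      have h1 := mem_image_e1_val hj hx
      have h2 : j < (e2 n j hj x).val := by rw [e2_val]; omega
      omega
    · obtain ⟨a, ha, hax⟩ := Finset.mem_image.mp hx
      obtain ⟨b, hb, hby⟩ := Finset.mem_image.mp hy
      exact ⟨B₂, h2, (e2_inj hj hax) ▸ ha, (e2_inj hj hby) ▸ hb⟩
  · rintro ⟨B, hB, hx, hy⟩
    exact ⟨B.image (e2 n j hj),
      by rw [glue_parts]; exact Finset.mem_union_right _ (Finset.mem_image_of_mem _ hB),
      Finset.mem_image_of_mem _ hx, Finset.mem_image_of_mem _ hy⟩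

/-- NC partitions split at the max of the block of `0`. -/
lemma nc_splitsAt (π : FP (n+1)) (hNC : IsNC π) : SplitsAt (cmax π) π := by
  intro B hB
  by_cases hh : highSide (cmax π) B
  · exact Or.inr hh
  · left
    rw [highSide, not_forall] at hh
    obtain ⟨u, hu⟩ := hh
    rw [Classical.not_imp] at hu
    obtain ⟨huB, huv⟩ := hu
    have huval : u.val ≤ cmax π := by omega
    intro v hv
    by_contra hvc
    have hvval : cmax π < v.val := by omega
    obtain ⟨x, hx, hxv⟩ := cmax_spec π
    by_cases hBp : B = π.part 0
    · exact absurd (le_cmax π (hBp ▸ hv)) (by omega)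
    · have hu0 : u ∉ π.part 0 := fun hc =>
        hBp (π.eq_of_mem_parts hB (π.part_mem.mpr (Finset.mem_univ 0)) huB hc)
      have hune : u.val ≠ 0 := fun hc => hu0 (by
        have : u = 0 := Fin.ext hc
        rw [this]; exact π.mem_part (Finset.mem_univ 0))
      have hux : u.val ≠ cmax π := fun hc => hu0 (by
        have : u = x := Fin.ext (by omega)
        rw [this]; exact hx)
      have hlt1 : (0 : Fin (n+1)) < u := by
        rw [Fin.lt_def, Fin.val_zero]; omega
      have hlt2 : u < x := by rw [Fin.lt_def]; omega
      have hlt3 : x < v := by rw [Fin.lt_def]; omega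
      have hsb := hNC 0 u x v hlt1 hlt2 hlt3
        ⟨π.part 0, π.part_mem.mpr (Finset.mem_univ 0), π.mem_part (Finset.mem_univ 0), hx⟩
        ⟨B, hB, huB, hv⟩
      obtain ⟨C, hC, h0C, huC⟩ := hsb
      have : π.part 0 = C := π.part_eq_of_mem hC h0C
      exact hu0 (this ▸ huC)

/-- Interval partitions split at the max of the block of `0`. -/
lemma int_splitsAt (π : FP (n+1)) (hInt : IsIntervalPartition π) : SplitsAt (cmax π) π := by
  intro B hB
  by_cases hh : highSide (cmax π) B
  · exact Or.inr hh
  · left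
    rw [highSide, not_forall] at hh
    obtain ⟨u, hu⟩ := hh
    rw [Classical.not_imp] at hu
    obtain ⟨huB, huv⟩ := hu
    intro v hv
    by_contra hvc
    obtain ⟨x, hx, hxv⟩ := cmax_spec π
    have hxB : x ∈ B := hInt B hB u huB v hv x
      (by rw [Fin.le_def]; omega) (by rw [Fin.le_def]; omega)
    have hBp : B = π.part 0 :=
      π.eq_of_mem_parts hB (π.part_mem.mpr (Finset.mem_univ 0)) hxB hx
    exact absurd (le_cmax π (hBp ▸ hv)) (by omega)

lemma nc_glue_iff {j : ℕ} (hj : j < n) (π₁ : FP (j+1)) (π₂ : FP (n-1-j+1)) :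
    IsNC (glue n j hj π₁ π₂) ↔ IsNC π₁ ∧ IsNC π₂ := by
  constructor
  · intro hNC
    constructor
    · intro a b c d hab hbc hcd hac hbd
      exact (sameBlock_glue_e1 hj).mp (hNC _ _ _ _ ((e1_strictMono hj) hab)
        ((e1_strictMono hj) hbc) ((e1_strictMono hj) hcd)
        ((sameBlock_glue_e1 hj).mpr hac) ((sameBlock_glue_e1 hj).mpr hbd))
    · intro a b c d hab hbc hcd hac hbd
      exact (sameBlock_glue_e2 hj).mp (hNC _ _ _ _ ((e2_strictMono hj) hab)
        ((e2_strictMono hj) hbc) ((e2_strictMono hj) hcd)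
        ((sameBlock_glue_e2 hj).mpr hac) ((sameBlock_glue_e2 hj).mpr hbd))
  · rintro ⟨h1, h2⟩
    intro a b c d hab hbc hcd hac hbd
    obtain ⟨B, hB, haB, hcB⟩ := hac
    obtain ⟨C, hC, hbC, hdC⟩ := hbd
    rcases mem_glue_parts hj hB with ⟨B₁, hB1, rfl⟩ | ⟨B₂, hB2, rfl⟩
    · -- low case
      obtain ⟨a', ha', rfl⟩ := Finset.mem_image.mp haB
      obtain ⟨c', hc', rfl⟩ := Finset.mem_image.mp hcB
      have hbval : b.val ≤ j := by
        have := Fin.lt_def.mp hbc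
        rw [e1_val] at this
        have := c'.isLt
        omega
      obtain ⟨b', rfl⟩ := exists_e1 hj hbval
      rcases mem_glue_parts hj hC with ⟨C₁, hC1, rfl⟩ | ⟨C₂, hC2, rfl⟩
      · obtain ⟨b'', hb'', hbeq⟩ := Finset.mem_image.mp hbC
        obtain ⟨d', hd', rfl⟩ := Finset.mem_image.mp hdC
        have hb'C : b' ∈ C₁ := (e1_inj hj hbeq) ▸ hb''
        have hres := h1 a' b' c' d' ((e1_strictMono hj).lt_iff_lt.mp hab)
          ((e1_strictMono hj).lt_iff_lt.mp hbc) ((e1_strictMono hj).lt_iff_lt.mp hcd)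
          ⟨B₁, hB1, ha', hc'⟩ ⟨C₁, hC1, hb'C, hd'⟩
        exact (sameBlock_glue_e1 hj).mpr hres
      · exfalso
        have := mem_image_e2_val hj hbC
        rw [e1_val] at this
        omega
    · -- high case
      obtain ⟨a', ha', rfl⟩ := Finset.mem_image.mp haB
      obtain ⟨c', hc', rfl⟩ := Finset.mem_image.mp hcB
      have hbval : j < b.val := by
        have := Fin.lt_def.mp hab
        rw [e2_val] at this
        omega
      obtain ⟨b', rfl⟩ := exists_e2 (x := b) hj hbval
      rcases mem_glue_parts hj hC with ⟨C₁, hC1, rfl⟩ | ⟨C₂, hC2, rfl⟩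
      · exfalso
        have := mem_image_e1_val hj hbC
        rw [e2_val] at this
        omega
      · obtain ⟨b'', hb'', hbeq⟩ := Finset.mem_image.mp hbC
        obtain ⟨d', hd', rfl⟩ := Finset.mem_image.mp hdC
        have hb'C : b' ∈ C₂ := (e2_inj hj hbeq) ▸ hb''
        have hres := h2 a' b' c' d' ((e2_strictMono hj).lt_iff_lt.mp hab)
          ((e2_strictMono hj).lt_iff_lt.mp hbc) ((e2_strictMono hj).lt_iff_lt.mp hcd)
          ⟨B₂, hB2, ha', hc'⟩ ⟨C₂, hC2, hb'C, hd'⟩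
        exact (sameBlock_glue_e2 hj).mpr hres

lemma int_glue_iff {j : ℕ} (hj : j < n) (π₁ : FP (j+1)) (π₂ : FP (n-1-j+1)) :
    IsIntervalPartition (glue n j hj π₁ π₂) ↔
      IsIntervalPartition π₁ ∧ IsIntervalPartition π₂ := by
  constructor
  · intro hg
    constructor
    · intro B hB x hx z hz y hxy hyz
      have hmem : B.image (e1 n j hj) ∈ (glue n j hj π₁ π₂).parts := by
        rw [glue_parts]
        exact Finset.mem_union_left _ (Finset.mem_image_of_mem _ hB)
      have := hg _ hmem _ (Finset.mem_image_of_mem _ hx) _ (Finset.mem_image_of_mem _ hz)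
        (e1 n j hj y) ((e1_strictMono hj).le_iff_le.mpr hxy)
        ((e1_strictMono hj).le_iff_le.mpr hyz)
      obtain ⟨y', hy', hyeq⟩ := Finset.mem_image.mp this
      exact (e1_inj hj hyeq) ▸ hy'
    · intro B hB x hx z hz y hxy hyz
      have hmem : B.image (e2 n j hj) ∈ (glue n j hj π₁ π₂).parts := by
        rw [glue_parts]
        exact Finset.mem_union_right _ (Finset.mem_image_of_mem _ hB)
      have := hg _ hmem _ (Finset.mem_image_of_mem _ hx) _ (Finset.mem_image_of_mem _ hz)
        (e2 n j hj y) ((e2_strictMono hj).le_iff_le.mpr hxy)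
        ((e2_strictMono hj).le_iff_le.mpr hyz)
      obtain ⟨y', hy', hyeq⟩ := Finset.mem_image.mp this
      exact (e2_inj hj hyeq) ▸ hy'
  · rintro ⟨h1, h2⟩
    intro B hB x hx z hz y hxy hyz
    rcases mem_glue_parts hj hB with ⟨B₁, hB1, rfl⟩ | ⟨B₂, hB2, rfl⟩
    · obtain ⟨x', hx', rfl⟩ := Finset.mem_image.mp hx
      obtain ⟨z', hz', rfl⟩ := Finset.mem_image.mp hz
      have hyval : y.val ≤ j := by
        have := Fin.le_def.mp hyz
        rw [e1_val] at this
        have := z'.isLt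
        omega
      obtain ⟨y', rfl⟩ := exists_e1 hj hyval
      have hy' : y' ∈ B₁ := h1 B₁ hB1 x' hx' z' hz' y'
        ((e1_strictMono hj).le_iff_le.mp hxy) ((e1_strictMono hj).le_iff_le.mp hyz)
      exact Finset.mem_image_of_mem _ hy'
    · obtain ⟨x', hx', rfl⟩ := Finset.mem_image.mp hx
      obtain ⟨z', hz', rfl⟩ := Finset.mem_image.mp hz
      have hyval : j < y.val := by
        have := Fin.le_def.mp hxy
        rw [e2_val] at this
        omega
      obtain ⟨y', rfl⟩ := exists_e2 (x := y) hj hyval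
      have hy' : y' ∈ B₂ := h2 B₂ hB2 x' hx' z' hz' y'
        ((e2_strictMono hj).le_iff_le.mp hxy) ((e2_strictMono hj).le_iff_le.mp hyz)
      exact Finset.mem_image_of_mem _ hy'

/-- The only interval partition `π` with `π ≪ 1` is `1` itself. -/
lemma int_ll_iff_fullPart {m : ℕ} (π : FP (m+1)) :
    (IsIntervalPartition π ∧ Ll π (fullPart m)) ↔ π = fullPart m := by
  constructor
  · rintro ⟨hInt, hLl⟩
    rw [Ll_fullPart_iff] at hLl
    obtain ⟨B, hB, h0, hl⟩ := hLl
    have hBu : B = Finset.univ := by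
      ext x
      simp only [Finset.mem_univ, iff_true]
      exact hInt B hB 0 h0 (Fin.last m) hl x (Fin.zero_le x) (Fin.le_last x)
    subst hBu
    apply FP_ext
    rw [fullPart_parts]
    apply Finset.eq_singleton_iff_unique_mem.mpr
    refine ⟨hB, fun C hC => ?_⟩
    by_contra hne
    have hd : Disjoint C Finset.univ := π.disjoint hC hB hne
    obtain ⟨c, hc⟩ := π.nonempty_of_mem_parts hC
    exact (Finset.disjoint_left.mp hd hc) (Finset.mem_univ c)
  · rintro rfl
    constructor
    · intro B hB x _ z _ y _ _
      rw [fullPart_parts, Finset.mem_singleton] at hB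
      subst hB
      exact Finset.mem_univ y
    · rw [Ll_fullPart_iff]
      exact ⟨Finset.univ, by rw [fullPart_parts]; exact Finset.mem_singleton_self _,
        Finset.mem_univ _, Finset.mem_univ _⟩

lemma sum_int_ll {k m : ℕ} (s : NCSeries k) (u : Fin (m+1) → Fin k) :
    ∑ π : FP (m+1),
      (if IsIntervalPartition π ∧ Ll π (fullPart m) then genCoeff s u π else 0) = s m u := by
  have h : ∀ π : FP (m+1),
      (if IsIntervalPartition π ∧ Ll π (fullPart m) then genCoeff s u π else 0)
        = if π = fullPart m then genCoeff s u π else 0 :=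
    fun π => if_congr (int_ll_iff_fullPart π) rfl rfl
  rw [Finset.sum_congr rfl (fun π _ => h π),
    Finset.sum_ite_eq' Finset.univ (fullPart m) (genCoeff s u)]
  simp [genCoeff_fullPart]

end Instances

section Master

lemma master {k n : ℕ} (s : NCSeries k) (w : Fin (n+1) → Fin k)
    (Q : ∀ m : ℕ, FP m → Prop)
    (hsplit : ∀ π : FP (n+1), Q (n+1) π → SplitsAt (cmax π) π)
    (hglue : ∀ (j : ℕ) (hj : j < n) (π₁ : FP (j+1)) (π₂ : FP (n-1-j+1)),
      Q (n+1) (glue n j hj π₁ π₂) ↔ Q (j+1) π₁ ∧ Q (n-1-j+1) π₂) :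
    ∑ π : FP (n+1), (if Q (n+1) π then genCoeff s w π else 0)
      = (∑ j ∈ Finset.range n, if hj : j < n then
          (∑ π₁ : FP (j+1), if Q (j+1) π₁ ∧ Ll π₁ (fullPart j) then
            genCoeff s (fun x => w (e1 n j hj x)) π₁ else 0)
          * (∑ π₂ : FP (n-1-j+1), if Q (n-1-j+1) π₂ then
            genCoeff s (fun x => w (e2 n j hj x)) π₂ else 0)
        else 0)
      + ∑ π : FP (n+1), (if Q (n+1) π ∧ Ll π (fullPart n) then genCoeff s w π else 0) := by
  rw [sum_fiber s w (Q (n+1)), Finset.sum_range_succ, fiber_top]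
  congr 1
  apply Finset.sum_congr rfl
  intro j hjm
  have hj : j < n := Finset.mem_range.mp hjm
  rw [dif_pos hj]
  exact fiber_eq hj s w (Q (n+1)) (Q (j+1)) (Q (n-1-j+1))
    (fun π hQ hc => hc ▸ hsplit π hQ) (hglue j hj)

lemma key {k : ℕ} (μ : Dist k) (f g : NCSeries k)
    (hf : IsRTransform μ f) (hg : IsEtaSeries μ g) :
    ∀ (n : ℕ) (w : Fin (n+1) → Fin k),
      g n w = ∑ π : FP (n+1),
        if IsNC π ∧ Ll π (fullPart n) then genCoeff f w π else 0 := by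
  intro n
  induction n using Nat.strong_induction_on with
  | _ n IH =>
    intro w
    have hInt := master (n := n) g w (fun _ π => IsIntervalPartition π)
      (fun π hπ => int_splitsAt π hπ) (fun j hj π₁ π₂ => int_glue_iff hj π₁ π₂)
    have hNC := master (n := n) f w (fun _ π => IsNC π)
      (fun π hπ => nc_splitsAt π hπ) (fun j hj π₁ π₂ => nc_glue_iff hj π₁ π₂)
    rw [← hg n w] at hInt
    rw [← hf n w] at hNC
    have e_int : (∑ j ∈ Finset.range n, if hj : j < n then
          (∑ π₁ : FP (j+1), if IsIntervalPartition π₁ ∧ Ll π₁ (fullPart j) then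
            genCoeff g (fun x => w (e1 n j hj x)) π₁ else 0)
          * (∑ π₂ : FP (n-1-j+1), if IsIntervalPartition π₂ then
            genCoeff g (fun x => w (e2 n j hj x)) π₂ else 0)
        else 0)
        = ∑ j ∈ Finset.range n, (if hj : j < n then
          (g j (fun x => w (e1 n j hj x)))
            * momentSeries μ (n-1-j) (fun x => w (e2 n j hj x)) else 0) := by
      apply Finset.sum_congr rfl
      intro j hjm
      have hj : j < n := Finset.mem_range.mp hjm
      simp only [dif_pos hj]
      rw [sum_int_ll g (fun x => w (e1 n j hj x)),
        ← hg (n-1-j) (fun x => w (e2 n j hj x))]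
    have e_nc : (∑ j ∈ Finset.range n, if hj : j < n then
          (∑ π₁ : FP (j+1), if IsNC π₁ ∧ Ll π₁ (fullPart j) then
            genCoeff f (fun x => w (e1 n j hj x)) π₁ else 0)
          * (∑ π₂ : FP (n-1-j+1), if IsNC π₂ then
            genCoeff f (fun x => w (e2 n j hj x)) π₂ else 0)
        else 0)
        = ∑ j ∈ Finset.range n, (if hj : j < n then
          (g j (fun x => w (e1 n j hj x)))
            * momentSeries μ (n-1-j) (fun x => w (e2 n j hj x)) else 0) := by
      apply Finset.sum_congr rfl
      intro j hjm
      have hj : j < n := Finset.mem_range.mp hjm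
      simp only [dif_pos hj]
      rw [← IH j hj (fun x => w (e1 n j hj x)),
        ← hf (n-1-j) (fun x => w (e2 n j hj x))]
    rw [e_int, sum_int_ll g w] at hInt
    rw [e_nc] at hNC
    exact add_left_cancel (hInt.symm.trans hNC)

end Master

/-- Proposition 3.9.1: if `f = R_μ` and `g = η_μ`, then
`Cf_w(g) = Σ_{π ∈ NC(n), π ≪ 1_n} Cf_{w;π}(f)`. -/
theorem statement4 (k : ℕ) (hk : 0 < k) (μ : Dist k) (hμ : IsDalg μ)
    (f g : NCSeries k) (hf : IsRTransform μ f) (hg : IsEtaSeries μ g)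
    (n : ℕ) (w : Fin (n+1) → Fin k) :
    g n w = ∑ π : FP (n+1),
      if IsNC π ∧ Ll π (fullPart n) then genCoeff f w π else 0 :=
  key μ f g hf hg n w
end BBP
end
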